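/- arXiv:1506.00944 — 6 statements merged into one kernel-verified Lean document; each statement's English description precedes it below -/
import Mathlib

section
/- Let ℓ ≥ 2, let k ≥ 0 be an integer, and let G be a finite simple graph none of whose connected components is a clique or an ℓ-clique. If there exists an edition set F for G with |F| = k such that G+F is an L-cluster graph, then Q(G) ≤ (2ℓ+2)k, P(G) ≤ 2ℓk, and S(G) ≤ 2k. -/
open SimpleGraph

variable {V : Type*}

/-- The graph obtained from `G` by applying the edition set `F`
(symmetric difference of the edge set with `F`). -/
def editGraph (G : SimpleGraph V) (F : Finset (Sym2 V)) : SimpleGraph V :=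
  SimpleGraph.fromEdgeSet (symmDiff G.edgeSet (F : Set (Sym2 V)))

/-- An edition set is a finite set of unordered pairs of *distinct* vertices. -/
def IsEditionSet (F : Finset (Sym2 V)) : Prop := ∀ e ∈ F, ¬ e.IsDiag

/-- `S` induces in `G` an `ℓ`-clique: a connected complete (at most) `ℓ`-partite graph,
i.e. `S` splits into at most `ℓ` independent sets with all edges present between
different parts, and the induced subgraph is connected. -/
def IsEllCliqueOn (ℓ : ℕ) (G : SimpleGraph V) (S : Set V) : Prop :=
  (G.induce S).Connected ∧
  ∃ f : V → Fin ℓ, ∀ x ∈ S, ∀ y ∈ S, x ≠ y → (G.Adj x y ↔ f x ≠ f y)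

/-- A cluster graph: every connected component is a clique. -/
def IsCluster (G : SimpleGraph V) : Prop :=
  ∀ c : G.ConnectedComponent, G.IsClique c.supp

/-- A `K_ℓ`-cluster graph: every connected component is an `ℓ`-clique. -/
def IsKlCluster (ℓ : ℕ) (G : SimpleGraph V) : Prop :=
  ∀ c : G.ConnectedComponent, IsEllCliqueOn ℓ G c.supp

/-- An `L`-cluster graph: every connected component is a clique or an `ℓ`-clique. -/
def IsLCluster (ℓ : ℕ) (G : SimpleGraph V) : Prop :=
  ∀ c : G.ConnectedComponent, G.IsClique c.supp ∨ IsEllCliqueOn ℓ G c.supp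

/-- `G` contains an induced subgraph isomorphic to `H`. -/
def Contains {W : Type*} (H : SimpleGraph W) (G : SimpleGraph V) : Prop :=
  Nonempty (H ↪g G)

/-- The paw: a triangle with a pendant vertex (the complement of `P3 ∪ K1`). -/
def paw : SimpleGraph (Fin 4) :=
  SimpleGraph.fromEdgeSet {s(0,1), s(0,2), s(1,2), s(0,3)}

/-- The complete graph on `ℓ + 2` vertices minus one edge. -/
def completeMinusEdge (ℓ : ℕ) : SimpleGraph (Fin (ℓ + 2)) where
  Adj x y := x ≠ y ∧ s(x,y) ≠ s((0 : Fin (ℓ + 2)), 1)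
  symm := ⟨by
    rintro x y ⟨h1, h2⟩
    exact ⟨h1.symm, by rwa [Sym2.eq_swap]⟩⟩
  loopless := ⟨fun x h => h.1 rfl⟩

/-- The graph `G̃` on `V × {1,…,ℓ}`: `(u,p)` is adjacent to `(v,q)` iff `p ≠ q` and
(`u = v` or `uv ∈ E(G)`). -/
def tilde (ℓ : ℕ) (G : SimpleGraph V) : SimpleGraph (V × Fin ℓ) where
  Adj a b := a.2 ≠ b.2 ∧ (a.1 = b.1 ∨ G.Adj a.1 b.1)
  symm := ⟨fun _ _ h => ⟨h.1.symm, h.2.imp Eq.symm (fun h' => h'.symm)⟩⟩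
  loopless := ⟨fun _ h => h.1 rfl⟩

/-- `x` and `y` are twins in `G`: they are distinct and every other vertex is adjacent
to `x` iff it is adjacent to `y`. -/
def IsTwinPair (G : SimpleGraph V) (x y : V) : Prop :=
  x ≠ y ∧ ∀ z, z ≠ x → z ≠ y → (G.Adj z x ↔ G.Adj z y)

/-- The twin class of a vertex. -/
def twinClass (G : SimpleGraph V) (v : V) : Set V :=
  {w | w = v ∨ IsTwinPair G v w}

/-- The set of twin classes of `G`. -/
def twinClasses (G : SimpleGraph V) : Set (Set V) :=
  Set.range (twinClass G)

/-- The number of U-vertices of `G_Q` (singleton twin classes). -/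
noncomputable def Ucount (G : SimpleGraph V) : ℕ :=
  {C ∈ twinClasses G | C.Subsingleton}.ncard

/-- The number of P-vertices of `G_Q` (twin classes of size ≥ 2 of pairwise false twins). -/
noncomputable def Pcount (G : SimpleGraph V) : ℕ :=
  {C ∈ twinClasses G | 2 ≤ C.ncard ∧ ∀ x ∈ C, ∀ y ∈ C, x ≠ y → ¬ G.Adj x y}.ncard

/-- The number of S-vertices of `G_Q` (twin classes of size ≥ 2 of pairwise true twins). -/
noncomputable def Scount (G : SimpleGraph V) : ℕ :=
  {C ∈ twinClasses G | 2 ≤ C.ncard ∧ ∀ x ∈ C, ∀ y ∈ C, x ≠ y → G.Adj x y}.ncard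

/-- The total number of twin classes of `G` (vertices of the Q-quotient graph `G_Q`). -/
noncomputable def Qcount (G : SimpleGraph V) : ℕ :=
  (twinClasses G).ncard

/-- The edition set `F̃ = { {(u,p),(v,q)} : {u,v} ∈ F, p ≠ q }` on `V × {1,…,ℓ}`. -/
def liftEdition [Fintype V] [DecidableEq V] (ℓ : ℕ) (F : Finset (Sym2 V)) :
    Finset (Sym2 (V × Fin ℓ)) :=
  Finset.univ.filter (fun e => ∃ (u v : V) (p q : Fin ℓ),
    p ≠ q ∧ s(u,v) ∈ F ∧ e = s((u,p),(v,q)))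

section EditAuxSection
set_option linter.unusedVariables false
namespace EditAux

lemma twin_symm {G : SimpleGraph V} {x y : V} (h : IsTwinPair G x y) : IsTwinPair G y x :=
  ⟨h.1.symm, fun z hzy hzx => (h.2 z hzx hzy).symm⟩

lemma twin_trans {G : SimpleGraph V} {x y z : V} (hxy : IsTwinPair G x y)
    (hyz : IsTwinPair G y z) (hxz : x ≠ z) : IsTwinPair G x z := by
  refine ⟨hxz, fun w hwx hwz => ?_⟩
  by_cases hwy : w = y
  · subst hwy
    rw [G.adj_comm w x, hyz.2 x hxy.1 hxz, G.adj_comm x z,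
      hxy.2 z (Ne.symm hxz) (Ne.symm hyz.1), G.adj_comm z w]
  · exact (hxy.2 w hwx hwy).trans (hyz.2 w hwy hwz)

lemma mem_twinClass_self (G : SimpleGraph V) (v : V) : v ∈ twinClass G v := Or.inl rfl

lemma twin_of_mem {G : SimpleGraph V} {v x y : V} (hx : x ∈ twinClass G v)
    (hy : y ∈ twinClass G v) (hxy : x ≠ y) : IsTwinPair G x y := by
  rcases hx with rfl | hx
  · rcases hy with rfl | hy
    · exact absurd rfl hxy
    · exact hy
  · rcases hy with rfl | hy
    · exact twin_symm hx
    · exact twin_trans (twin_symm hx) hy hxy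

lemma twinClass_eq_of_mem {G : SimpleGraph V} {v w : V} (h : w ∈ twinClass G v) :
    twinClass G w = twinClass G v := by
  rcases h with rfl | hvw
  · rfl
  · ext u
    constructor
    · rintro (rfl | hwu)
      · exact Or.inr hvw
      · by_cases huv : u = v
        · exact Or.inl huv
        · exact Or.inr (twin_trans hvw hwu (fun e => huv e.symm))
    · rintro (rfl | hvu)
      · exact Or.inr (twin_symm hvw)
      · by_cases huw : u = w
        · exact Or.inl huw
        · exact Or.inr (twin_trans (twin_symm hvw) hvu (fun e => huw e.symm))

lemma class_self_eq {G : SimpleGraph V} {C : Set V} (hC : C ∈ twinClasses G) {x : V}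
    (hx : x ∈ C) : twinClass G x = C := by
  obtain ⟨v, rfl⟩ := hC
  exact twinClass_eq_of_mem hx

lemma class_eq_class {G : SimpleGraph V} {C1 C2 : Set V} (h1 : C1 ∈ twinClasses G)
    (h2 : C2 ∈ twinClasses G) {x : V} (hx1 : x ∈ C1) (hx2 : x ∈ C2) : C1 = C2 := by
  rw [← class_self_eq h1 hx1, ← class_self_eq h2 hx2]

lemma twin_of_mem_class {G : SimpleGraph V} {C : Set V} (hC : C ∈ twinClasses G)
    {x y : V} (hx : x ∈ C) (hy : y ∈ C) (hxy : x ≠ y) : IsTwinPair G x y := by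
  obtain ⟨v, rfl⟩ := hC
  exact twin_of_mem hx hy hxy

lemma edit_adj {G : SimpleGraph V} {F : Finset (Sym2 V)} (hF : IsEditionSet F) (x y : V) :
    (editGraph G F).Adj x y ↔ ((G.Adj x y ∧ s(x,y) ∉ F) ∨ (¬ G.Adj x y ∧ s(x,y) ∈ F)) := by
  unfold editGraph
  rw [fromEdgeSet_adj, Set.mem_symmDiff]
  simp only [mem_edgeSet, Finset.mem_coe]
  constructor
  · rintro ⟨h | h, _⟩
    · exact Or.inl ⟨h.1, h.2⟩
    · exact Or.inr ⟨h.2, h.1⟩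
  · rintro (⟨h1, h2⟩ | ⟨h1, h2⟩)
    · exact ⟨Or.inl ⟨h1, h2⟩, h1.ne⟩
    · exact ⟨Or.inr ⟨h2, h1⟩, fun e => hF _ h2 (Sym2.mk_isDiag_iff.mpr e)⟩

lemma untouched_adj {G : SimpleGraph V} {F : Finset (Sym2 V)} (hF : IsEditionSet F) {x : V}
    (hx : ¬ ∃ e ∈ F, x ∈ e) (y : V) : G.Adj x y ↔ (editGraph G F).Adj x y := by
  rw [edit_adj hF]
  have hnotin : s(x,y) ∉ F := fun h => hx ⟨_, h, Sym2.mem_mk_left x y⟩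
  constructor
  · intro h; exact Or.inl ⟨h, hnotin⟩
  · rintro (⟨h, _⟩ | ⟨_, h⟩)
    · exact h
    · exact absurd h hnotin

lemma touched_card [Fintype V] (F : Finset (Sym2 V)) :
    {v : V | ∃ e ∈ F, v ∈ e}.ncard ≤ 2 * F.card := by
  classical
  induction F using Finset.induction with
  | empty => simp
  | @insert e F' hne ih =>
    have hsplit : {v : V | ∃ e' ∈ insert e F', v ∈ e'}
        = {v : V | v ∈ e} ∪ {v : V | ∃ e' ∈ F', v ∈ e'} := by
      ext v
      simp only [Set.mem_setOf_eq, Finset.mem_insert, Set.mem_union]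
      constructor
      · rintro ⟨e', (rfl | he'), hv⟩
        · exact Or.inl hv
        · exact Or.inr ⟨e', he', hv⟩
      · rintro (hv | ⟨e', he', hv⟩)
        · exact ⟨e, Or.inl rfl, hv⟩
        · exact ⟨e', Or.inr he', hv⟩
    have hcard2 : {v : V | v ∈ e}.ncard ≤ 2 := by
      induction e with
      | _ a b =>
        have : {v : V | v ∈ s(a,b)} = {a, b} := by
          ext v; simp [Sym2.mem_iff]
        rw [this]
        exact le_trans (Set.ncard_insert_le a {b}) (by simp)
    rw [hsplit, Finset.card_insert_of_notMem hne]
    calc ({v : V | v ∈ e} ∪ {v : V | ∃ e' ∈ F', v ∈ e'}).ncard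
        ≤ {v : V | v ∈ e}.ncard + {v : V | ∃ e' ∈ F', v ∈ e'}.ncard := Set.ncard_union_le _ _
      _ ≤ 2 + 2 * F'.card := Nat.add_le_add hcard2 ih
      _ = 2 * (F'.card + 1) := by ring



variable {V : Type*} {G H : SimpleGraph V} {T : Set V} {ℓ : ℕ}

lemma twin_transfer (hU : ∀ x, x ∉ T → ∀ y, G.Adj x y ↔ H.Adj x y) {x y : V}
    (hx : x ∉ T) (hy : y ∉ T) : IsTwinPair G x y ↔ IsTwinPair H x y := by
  constructor <;> rintro ⟨hne, h⟩ <;> refine ⟨hne, fun z hzx hzy => ?_⟩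
  · constructor
    · intro hzx'
      exact ((hU y hy z).mp (((h z hzx hzy).mp ((hU x hx z).mpr hzx'.symm).symm).symm)).symm
    · intro hzy'
      exact ((hU x hx z).mp (((h z hzx hzy).mpr ((hU y hy z).mpr hzy'.symm).symm).symm)).symm
  · constructor
    · intro hzx'
      exact ((hU y hy z).mpr (((h z hzx hzy).mp ((hU x hx z).mp hzx'.symm).symm).symm)).symm
    · intro hzy'
      exact ((hU x hx z).mpr (((h z hzx hzy).mpr ((hU y hy z).mp hzy'.symm).symm).symm)).symm

lemma mem_supp_of_adj {c : H.ConnectedComponent} {x y : V} (hx : x ∈ c.supp)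
    (h : H.Adj x y) : y ∈ c.supp := by
  rw [SimpleGraph.ConnectedComponent.mem_supp_iff] at hx ⊢
  rw [← hx]
  exact SimpleGraph.ConnectedComponent.eq.mpr h.symm.reachable

lemma mk_mem_supp (H : SimpleGraph V) (v : V) : v ∈ (H.connectedComponentMk v).supp := by
  rw [SimpleGraph.ConnectedComponent.mem_supp_iff]

lemma comp_eq_of_mem {c1 c2 : H.ConnectedComponent} {v : V} (h1 : v ∈ c1.supp)
    (h2 : v ∈ c2.supp) : c1 = c2 := by
  rw [SimpleGraph.ConnectedComponent.mem_supp_iff] at h1 h2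
  rw [← h1, ← h2]

lemma not_isolated (hU : ∀ x, x ∉ T → ∀ y, G.Adj x y ↔ H.Adj x y)
    (hGnc : ∀ c : G.ConnectedComponent, ¬ (G.IsClique c.supp ∨ IsEllCliqueOn ℓ G c.supp))
    {x : V} (hx : x ∉ T) : ∃ z, H.Adj x z := by
  by_contra h
  push_neg at h
  have hGiso : ∀ z, ¬ G.Adj x z := fun z hz => h z ((hU x hx z).mp hz)
  apply hGnc (G.connectedComponentMk x)
  left
  have hsub : ∀ y ∈ (G.connectedComponentMk x).supp, y = x := by
    intro y hy
    rw [SimpleGraph.ConnectedComponent.mem_supp_iff, SimpleGraph.ConnectedComponent.eq] at hy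
    obtain ⟨w⟩ := hy.symm
    cases w with
    | nil => rfl
    | cons h' p => exact absurd h' (hGiso _)
  intro a ha b hb hab
  exact absurd ((hsub a ha).trans (hsub b hb).symm) hab

lemma htwin_clique {c : H.ConnectedComponent} (hc : H.IsClique c.supp) {x y : V}
    (hx : x ∈ c.supp) (hy : y ∈ c.supp) (hxy : x ≠ y) : IsTwinPair H x y := by
  refine ⟨hxy, fun z hzx hzy => ?_⟩
  by_cases hz : z ∈ c.supp
  · exact iff_of_true (hc hz hx hzx) (hc hz hy hzy)
  · exact iff_of_false (fun h => hz (mem_supp_of_adj hx h.symm))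
      (fun h => hz (mem_supp_of_adj hy h.symm))

lemma htwin_samepart {c : H.ConnectedComponent} {f : V → Fin ℓ}
    (hf : ∀ x ∈ c.supp, ∀ y ∈ c.supp, x ≠ y → (H.Adj x y ↔ f x ≠ f y)) {x y : V}
    (hx : x ∈ c.supp) (hy : y ∈ c.supp) (hxy : x ≠ y) (hfxy : f x = f y) :
    IsTwinPair H x y := by
  refine ⟨hxy, fun z hzx hzy => ?_⟩
  by_cases hz : z ∈ c.supp
  · rw [hf z hz x hx hzx, hf z hz y hy hzy, hfxy]
  · exact iff_of_false (fun h => hz (mem_supp_of_adj hx h.symm))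
      (fun h => hz (mem_supp_of_adj hy h.symm))

lemma htwin_singles {c : H.ConnectedComponent} {f : V → Fin ℓ}
    (hf : ∀ x ∈ c.supp, ∀ y ∈ c.supp, x ≠ y → (H.Adj x y ↔ f x ≠ f y)) {x y : V}
    (hx : x ∈ c.supp) (hy : y ∈ c.supp) (hxy : x ≠ y)
    (hsx : ∀ z ∈ c.supp, z ≠ x → f z ≠ f x) (hsy : ∀ z ∈ c.supp, z ≠ y → f z ≠ f y) :
    IsTwinPair H x y := by
  refine ⟨hxy, fun z hzx hzy => ?_⟩
  by_cases hz : z ∈ c.supp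
  · exact iff_of_true ((hf z hz x hx hzx).mpr (hsx z hz hzx))
      ((hf z hz y hy hzy).mpr (hsy z hz hzy))
  · exact iff_of_false (fun h => hz (mem_supp_of_adj hx h.symm))
      (fun h => hz (mem_supp_of_adj hy h.symm))

lemma class_mk_eq (hU : ∀ x, x ∉ T → ∀ y, G.Adj x y ↔ H.Adj x y)
    (hGnc : ∀ c : G.ConnectedComponent, ¬ (G.IsClique c.supp ∨ IsEllCliqueOn ℓ G c.supp))
    {C : Set V} (hC : C ∈ twinClasses G) (hunt : ∀ v ∈ C, v ∉ T) {x y : V}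
    (hx : x ∈ C) (hy : y ∈ C) :
    H.connectedComponentMk x = H.connectedComponentMk y := by
  by_cases hxy : x = y
  · rw [hxy]
  · have htwG : IsTwinPair G x y := twin_of_mem_class hC hx hy hxy
    have htwH : IsTwinPair H x y := (twin_transfer hU (hunt x hx) (hunt y hy)).mp htwG
    by_cases hadj : G.Adj x y
    · exact SimpleGraph.ConnectedComponent.eq.mpr ((hU x (hunt x hx) y).mp hadj).reachable
    · obtain ⟨z, hz⟩ := not_isolated hU hGnc (hunt x hx)
      have hzy : z ≠ y := by
        rintro rfl
        exact hadj ((hU x (hunt x hx) z).mpr hz)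
      have hzx : z ≠ x := hz.ne'
      have h2 : H.Adj z y := (htwH.2 z hzx hzy).mp hz.symm
      exact SimpleGraph.ConnectedComponent.eq.mpr (hz.reachable.trans h2.reachable)

lemma untouched_class_eq (hU : ∀ x, x ∉ T → ∀ y, G.Adj x y ↔ H.Adj x y)
    {C1 C2 : Set V} (h1 : C1 ∈ twinClasses G) (h2 : C2 ∈ twinClasses G)
    (h1u : ∀ v ∈ C1, v ∉ T) (h2u : ∀ v ∈ C2, v ∉ T) {x1 x2 : V}
    (hx1 : x1 ∈ C1) (hx2 : x2 ∈ C2) (h : x1 = x2 ∨ IsTwinPair H x1 x2) : C1 = C2 := by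
  rcases h with rfl | htw
  · exact class_eq_class h1 h2 hx1 hx2
  · have htwG : IsTwinPair G x1 x2 := (twin_transfer hU (h1u x1 hx1) (h2u x2 hx2)).mpr htw
    have : x2 ∈ twinClass G x1 := Or.inr htwG
    rw [class_self_eq h1 hx1] at this
    exact class_eq_class h1 h2 this hx2



variable {V : Type*} {G H : SimpleGraph V} {T : Set V} {ℓ : ℕ}

lemma comp_touched (hU : ∀ x, x ∉ T → ∀ y, G.Adj x y ↔ H.Adj x y)
    (hGnc : ∀ c : G.ConnectedComponent, ¬ (G.IsClique c.supp ∨ IsEllCliqueOn ℓ G c.supp))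
    (hL : IsLCluster ℓ H) (c : H.ConnectedComponent) : ∃ t, t ∈ c.supp ∧ t ∈ T := by
  by_contra h
  push_neg at h
  obtain ⟨v, hv⟩ := c.exists_rep
  have hvs : v ∈ c.supp := by rw [SimpleGraph.ConnectedComponent.mem_supp_iff]; exact hv
  have hagree : ∀ x ∈ c.supp, ∀ y, G.Adj x y ↔ H.Adj x y := fun x hx y => hU x (h x hx) y
  have hHG : ∀ x y, x ∈ c.supp → (p : H.Walk x y) → G.Reachable x y := by
    intro x y hx p
    induction p with
    | nil => exact SimpleGraph.Reachable.refl _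
    | @cons a b d h' p ih =>
      have hb : b ∈ c.supp := mem_supp_of_adj hx h'
      exact SimpleGraph.Reachable.trans ((hagree a hx b).mpr h').reachable (ih hb)
  have hGH : ∀ x y, x ∈ c.supp → (p : G.Walk x y) → y ∈ c.supp := by
    intro x y hx p
    induction p with
    | nil => exact hx
    | @cons a b d h' p ih =>
      have hb : b ∈ c.supp := mem_supp_of_adj hx ((hagree a hx b).mp h')
      exact ih hb
  have hsupp : (G.connectedComponentMk v).supp = c.supp := by
    ext y
    rw [SimpleGraph.ConnectedComponent.mem_supp_iff]
    constructor
    · intro hy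
      obtain ⟨p⟩ := (SimpleGraph.ConnectedComponent.eq.mp hy).symm
      exact hGH v y hvs p
    · intro hy
      have hreach : H.Reachable v y := by
        rw [SimpleGraph.ConnectedComponent.mem_supp_iff, ← hv] at hy
        exact (SimpleGraph.ConnectedComponent.eq.mp hy).symm
      obtain ⟨p⟩ := hreach
      exact SimpleGraph.ConnectedComponent.eq.mpr (hHG v y hvs p).symm
  refine hGnc (G.connectedComponentMk v) ?_
  rcases hL c with hclq | ⟨hconn, f, hf⟩
  · left
    rw [hsupp]
    intro a ha b hb hab
    exact (hagree a ha b).mpr (hclq ha hb hab)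
  · right
    rw [hsupp]
    constructor
    · have heq : G.induce (c.supp : Set V) = H.induce (c.supp : Set V) := by
        apply SimpleGraph.ext
        funext a b
        exact propext (hagree a a.2 b)
      rw [heq]
      exact hconn
    · exact ⟨f, fun x hx y hy hxy => by rw [hagree x hx y]; exact hf x hx y hy hxy⟩

lemma s_single (hU : ∀ x, x ∉ T → ∀ y, G.Adj x y ↔ H.Adj x y)
    {c : H.ConnectedComponent} {f : V → Fin ℓ}
    (hf : ∀ x ∈ c.supp, ∀ y ∈ c.supp, x ≠ y → (H.Adj x y ↔ f x ≠ f y))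
    {C : Set V} (hC : C ∈ twinClasses G) (h2 : 2 ≤ C.ncard)
    (hadj : ∀ x ∈ C, ∀ y ∈ C, x ≠ y → G.Adj x y)
    (hunt : ∀ v ∈ C, v ∉ T) (hCc : ∀ v ∈ C, v ∈ c.supp)
    (x : V) (hx : x ∈ C) : ∀ z ∈ c.supp, z ≠ x → f z ≠ f x := by
  obtain ⟨x', hx', hxx'⟩ := Set.exists_ne_of_one_lt_ncard (show 1 < C.ncard by omega) x
  have hGxx' : G.Adj x x' := hadj x hx x' hx' (Ne.symm hxx')
  have htwH : IsTwinPair H x x' :=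
    (twin_transfer hU (hunt x hx) (hunt x' hx')).mp
      (twin_of_mem_class hC hx hx' (Ne.symm hxx'))
  have hHxx' : H.Adj x x' := (hU x (hunt x hx) x').mp hGxx'
  have hfx' : f x' ≠ f x := Ne.symm ((hf x (hCc x hx) x' (hCc x' hx') hHxx'.ne).mp hHxx')
  intro z hz hzx hfz
  have hzx' : z ≠ x' := by rintro rfl; exact hfx' hfz
  have h1 : ¬ H.Adj z x := fun h => (hf z hz x (hCc x hx) hzx).mp h hfz
  have h2' : H.Adj z x' := (hf z hz x' (hCc x' hx') hzx').mpr (by rw [hfz]; exact Ne.symm hfx')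
  exact h1 ((htwH.2 z hzx hzx').mpr h2')

lemma p_samepart (hU : ∀ x, x ∉ T → ∀ y, G.Adj x y ↔ H.Adj x y)
    {c : H.ConnectedComponent} {f : V → Fin ℓ}
    (hf : ∀ x ∈ c.supp, ∀ y ∈ c.supp, x ≠ y → (H.Adj x y ↔ f x ≠ f y))
    {C : Set V} (hnadj : ∀ x ∈ C, ∀ y ∈ C, x ≠ y → ¬ G.Adj x y)
    (hunt : ∀ v ∈ C, v ∉ T) (hCc : ∀ v ∈ C, v ∈ c.supp)
    {x y : V} (hx : x ∈ C) (hy : y ∈ C) : f x = f y := by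
  by_cases hxy : x = y
  · rw [hxy]
  · by_contra hne
    exact hnadj x hx y hy hxy ((hU x (hunt x hx) y).mpr
      ((hf x (hCc x hx) y (hCc y hy) hxy).mpr hne))

lemma p_notclique [Fintype V] (hU : ∀ x, x ∉ T → ∀ y, G.Adj x y ↔ H.Adj x y)
    {c : H.ConnectedComponent} (hclq : H.IsClique c.supp)
    {C : Set V} (h2 : 2 ≤ C.ncard)
    (hnadj : ∀ x ∈ C, ∀ y ∈ C, x ≠ y → ¬ G.Adj x y)
    (hunt : ∀ v ∈ C, v ∉ T) (hCc : ∀ v ∈ C, v ∈ c.supp) : False := by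
  obtain ⟨x, y, hx, hy, hxy⟩ := (Set.one_lt_ncard_iff (Set.toFinite C)).mp (by omega : 1 < C.ncard)
  exact hnadj x hx y hy hxy
    ((hU x (hunt x hx) y).mpr (hclq (hCc x hx) (hCc y hy) hxy))

lemma prod_ncard [Fintype V] (T : Set V) (ℓ : ℕ) :
    (T ×ˢ (Set.univ : Set (Fin ℓ))).ncard = T.ncard * ℓ := by
  rw [← Nat.card_coe_set_eq, Nat.card_congr (Equiv.Set.prod T Set.univ), Nat.card_prod,
    Nat.card_coe_set_eq, Nat.card_congr (Equiv.Set.univ (Fin ℓ)),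
    Nat.card_eq_fintype_card, Fintype.card_fin]



variable {V : Type*} {G H : SimpleGraph V} {T : Set V} {ℓ : ℕ}

lemma count_Q [Fintype V] (hℓ : 2 ≤ ℓ)
    (hU : ∀ x, x ∉ T → ∀ y, G.Adj x y ↔ H.Adj x y)
    (hGnc : ∀ c : G.ConnectedComponent, ¬ (G.IsClique c.supp ∨ IsEllCliqueOn ℓ G c.supp))
    (hL : IsLCluster ℓ H) :
    (twinClasses G).ncard ≤ T.ncard + T.ncard * ℓ := by
  classical
  rcases isEmpty_or_nonempty V with hV | hV
  · have hempty : twinClasses G = ∅ := by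
      unfold twinClasses
      exact Set.range_eq_empty _
    simp [hempty]
  obtain ⟨v0⟩ := hV
  choose tC htC1 htC2 using comp_touched hU hGnc hL
  have hrepex : ∀ C : Set V, ∃ x : V, C ∈ twinClasses G → x ∈ C := by
    intro C
    by_cases h : C ∈ twinClasses G
    · obtain ⟨v, hv⟩ := h
      exact ⟨v, fun _ => hv ▸ mem_twinClass_self G v⟩
    · exact ⟨v0, fun hh => absurd hh h⟩
  choose rep hrep using hrepex
  have hrepTex : ∀ C : Set V, ∃ x : V, (C ∩ T).Nonempty → x ∈ C ∧ x ∈ T := by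
    intro C
    by_cases h : (C ∩ T).Nonempty
    · exact ⟨h.choose, fun _ => h.choose_spec⟩
    · exact ⟨v0, fun hh => absurd hh h⟩
  choose repT hrepT using hrepTex
  have hselex : ∀ c : H.ConnectedComponent, ∃ f : V → Fin ℓ,
      H.IsClique c.supp ∨ (∀ x ∈ c.supp, ∀ y ∈ c.supp, x ≠ y → (H.Adj x y ↔ f x ≠ f y)) := by
    intro c
    rcases hL c with h | ⟨_, f, hf⟩
    · exact ⟨fun _ => ⟨0, by omega⟩, Or.inl h⟩
    · exact ⟨f, Or.inr hf⟩
  choose fsel hfsel using hselex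
  have hsub : twinClasses G ⊆ {C ∈ twinClasses G | ¬ ∀ v ∈ C, v ∉ T}
      ∪ {C ∈ twinClasses G | ∀ v ∈ C, v ∉ T} := by
    intro C hC
    by_cases h : ∀ v ∈ C, v ∉ T
    exacts [Or.inr ⟨hC, h⟩, Or.inl ⟨hC, h⟩]
  refine le_trans (le_trans (Set.ncard_le_ncard hsub (Set.toFinite _))
    (Set.ncard_union_le _ _)) (Nat.add_le_add ?_ ?_)
  · -- touched classes
    apply Set.ncard_le_ncard_of_injOn repT
    · rintro C ⟨hC1, hC2⟩
      push_neg at hC2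
      obtain ⟨v, hv1, hv2⟩ := hC2
      exact (hrepT C ⟨v, hv1, hv2⟩).2
    · rintro C1 ⟨h1, h1t⟩ C2 ⟨h2, h2t⟩ heq
      push_neg at h1t h2t
      obtain ⟨v1, hv11, hv12⟩ := h1t
      obtain ⟨v2, hv21, hv22⟩ := h2t
      have hm1 : repT C1 ∈ C1 := (hrepT C1 ⟨v1, hv11, hv12⟩).1
      have hm2 : repT C2 ∈ C2 := (hrepT C2 ⟨v2, hv21, hv22⟩).1
      exact class_eq_class h1 h2 hm1 (heq ▸ hm2)
  · -- untouched classes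
    rw [← prod_ncard T ℓ]
    apply Set.ncard_le_ncard_of_injOn (fun C =>
      ((tC (H.connectedComponentMk (rep C)), fsel (H.connectedComponentMk (rep C)) (rep C)) :
        V × Fin ℓ))
    · rintro C ⟨hC1, hC2⟩
      exact ⟨htC2 _, Set.mem_univ _⟩
    · rintro C1 ⟨h1, h1u⟩ C2 ⟨h2, h2u⟩ heq
      rw [Prod.mk.injEq] at heq
      obtain ⟨heq1, heq2⟩ := heq
      have hceq : H.connectedComponentMk (rep C1) = H.connectedComponentMk (rep C2) :=
        comp_eq_of_mem (htC1 (H.connectedComponentMk (rep C1)))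
          (heq1 ▸ htC1 (H.connectedComponentMk (rep C2)))
      have hs1 : rep C1 ∈ (H.connectedComponentMk (rep C1)).supp := mk_mem_supp H _
      have hs2 : rep C2 ∈ (H.connectedComponentMk (rep C1)).supp := by
        rw [hceq]; exact mk_mem_supp H _
      by_cases hr : rep C1 = rep C2
      · exact untouched_class_eq hU h1 h2 h1u h2u (hrep C1 h1) (hrep C2 h2) (Or.inl hr)
      · refine untouched_class_eq hU h1 h2 h1u h2u (hrep C1 h1) (hrep C2 h2) (Or.inr ?_)
        rcases hfsel (H.connectedComponentMk (rep C1)) with hclq | hf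
        · exact htwin_clique hclq hs1 hs2 hr
        · refine htwin_samepart hf hs1 hs2 hr ?_
          rw [heq2, hceq]



variable {V : Type*} {G H : SimpleGraph V} {T : Set V} {ℓ : ℕ}

lemma s_good [Fintype V]
    (hU : ∀ x, x ∉ T → ∀ y, G.Adj x y ↔ H.Adj x y)
    (hGnc : ∀ c : G.ConnectedComponent, ¬ (G.IsClique c.supp ∨ IsEllCliqueOn ℓ G c.supp))
    (hL : IsLCluster ℓ H)
    (repT : Set V → V) (hrepT : ∀ C : Set V, (C ∩ T).Nonempty → repT C ∈ C ∧ repT C ∈ T)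
    {c : H.ConnectedComponent} (htc : ∃ t, t ∈ c.supp ∧ t ∈ T) {C : Set V}
    (hC1 : C ∈ twinClasses G) (hC2 : 2 ≤ C.ncard)
    (hC3 : ∀ x ∈ C, ∀ y ∈ C, x ≠ y → G.Adj x y)
    (hunt : ∀ v ∈ C, v ∉ T) (hCc : ∀ v ∈ C, v ∈ c.supp) :
    ∃ t, (t ∈ T ∧ t ∈ c.supp) ∧
      ∀ D : Set V, D ∈ twinClasses G → 2 ≤ D.ncard →
        (∀ x ∈ D, ∀ y ∈ D, x ≠ y → G.Adj x y) → (D ∩ T).Nonempty → repT D ≠ t := by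
  by_contra hno
  push_neg at hno
  have hkey : ∀ t, t ∈ T → t ∈ c.supp →
      (twinClass G t ∈ twinClasses G ∧ 2 ≤ (twinClass G t).ncard ∧
        (∀ x ∈ twinClass G t, ∀ y ∈ twinClass G t, x ≠ y → G.Adj x y)) ∧
      repT (twinClass G t) = t := by
    intro t h1 h2
    obtain ⟨D, hD1, hD2, hD3, hD4, hD5⟩ := hno t ⟨h1, h2⟩
    have htD : t ∈ D := hD5 ▸ (hrepT D hD4).1
    have hDt : twinClass G t = D := class_self_eq hD1 htD
    rw [hDt]
    exact ⟨⟨hD1, hD2, hD3⟩, hD5⟩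
  obtain ⟨t0, ht0c, ht0T⟩ := htc
  obtain ⟨⟨hDtw, hDn, hDadj⟩, hDrep⟩ := hkey t0 ht0T ht0c
  have htD : t0 ∈ twinClass G t0 := mem_twinClass_self G t0
  obtain ⟨u, huD, hut⟩ :=
    Set.exists_ne_of_one_lt_ncard (show 1 < (twinClass G t0).ncard by omega) t0
  have hGtu : G.Adj t0 u := hDadj t0 htD u huD (Ne.symm hut)
  have htwtu : IsTwinPair G t0 u := twin_of_mem htD huD (Ne.symm hut)
  have htC : t0 ∉ C := fun h => hunt t0 h ht0T
  have hCD : C ≠ twinClass G t0 := fun e => htC (e ▸ htD)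
  have huC : u ∉ C := fun h => hCD (class_eq_class hC1 hDtw h huD)
  obtain ⟨z, hzC, hzu⟩ := Set.exists_ne_of_one_lt_ncard (show 1 < C.ncard by omega) u
  have hzT : z ∉ T := hunt z hzC
  have hzc : z ∈ c.supp := hCc z hzC
  have hzt : z ≠ t0 := fun e => htC (e ▸ hzC)
  have main : H.Adj t0 z → False := by
    intro hHtz
    have hGtz : G.Adj t0 z := ((hU z hzT t0).mpr hHtz.symm).symm
    have hGuz : G.Adj u z := ((htwtu.2 z hzt hzu).mp hGtz.symm).symm
    have hHuz : H.Adj u z := ((hU z hzT u).mp hGuz.symm).symm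
    have huc : u ∈ c.supp := mem_supp_of_adj hzc hHuz.symm
    have huT : u ∉ T := by
      intro huT
      obtain ⟨_, heq'⟩ := hkey u huT huc
      rw [twinClass_eq_of_mem huD] at heq'
      exact hut (heq'.symm.trans hDrep)
    rcases hL c with hclq | ⟨_, f, hf⟩
    · have htwHuz : IsTwinPair H u z := htwin_clique hclq huc hzc (Ne.symm hzu)
      have htwGuz : IsTwinPair G u z := (twin_transfer hU huT hzT).mpr htwHuz
      have huz' : u ∈ twinClass G z := Or.inr (twin_symm htwGuz)
      rw [class_self_eq hC1 hzC] at huz'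
      exact huC huz'
    · have hsing := s_single hU hf hC1 hC2 hC3 hunt hCc
      by_cases husing : ∀ w ∈ c.supp, w ≠ u → f w ≠ f u
      · have htwHuz : IsTwinPair H u z :=
          htwin_singles hf huc hzc (Ne.symm hzu) husing (hsing z hzC)
        have htwGuz : IsTwinPair G u z := (twin_transfer hU huT hzT).mpr htwHuz
        have huz' : u ∈ twinClass G z := Or.inr (twin_symm htwGuz)
        rw [class_self_eq hC1 hzC] at huz'
        exact huC huz'
      · push_neg at husing
        obtain ⟨w, hwc, hwu, hfwu⟩ := husing
        have hHtu : H.Adj t0 u := ((hU u huT t0).mp hGtu.symm).symm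
        have hftu : f t0 ≠ f u := (hf t0 ht0c u huc hHtu.ne).mp hHtu
        have hwt : w ≠ t0 := by rintro rfl; exact hftu hfwu
        have hnHwu : ¬ H.Adj w u := fun h => (hf w hwc u huc hwu).mp h hfwu
        have hnGwu : ¬ G.Adj w u := fun h => hnHwu (((hU u huT w).mp h.symm).symm)
        have hnGwt : ¬ G.Adj w t0 := fun h => hnGwu ((htwtu.2 w hwt hwu).mp h)
        have hHwt : H.Adj w t0 := (hf w hwc t0 ht0c hwt).mpr (by rw [hfwu]; exact Ne.symm hftu)
        have hwT : w ∈ T := by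
          by_contra hwT
          exact hnGwt ((hU w hwT t0).mpr hHwt)
        obtain ⟨⟨hDwtw, hDwn, hDwadj⟩, hDwrep⟩ := hkey w hwT hwc
        have hwDw : w ∈ twinClass G w := mem_twinClass_self G w
        obtain ⟨v, hvDw, hvw⟩ :=
          Set.exists_ne_of_one_lt_ncard (show 1 < (twinClass G w).ncard by omega) w
        have hGwv : G.Adj w v := hDwadj w hwDw v hvDw (Ne.symm hvw)
        have htwwv : IsTwinPair G w v := twin_of_mem hwDw hvDw (Ne.symm hvw)
        have htDw : t0 ∉ twinClass G w := by
          intro h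
          have hDD : twinClass G t0 = twinClass G w := twinClass_eq_of_mem h
          rw [← hDD] at hDwrep
          exact hwt (hDwrep.symm.trans hDrep)
        have huDw : u ∉ twinClass G w := by
          intro h
          have hDD : twinClass G u = twinClass G w := twinClass_eq_of_mem h
          have hDD2 : twinClass G u = twinClass G t0 := twinClass_eq_of_mem huD
          exact htDw (by rw [← hDD, hDD2]; exact htD)
        obtain ⟨z', hz'C, hz'v⟩ := Set.exists_ne_of_one_lt_ncard (show 1 < C.ncard by omega) v
        have hz'T : z' ∉ T := hunt z' hz'C
        have hz'c : z' ∈ c.supp := hCc z' hz'C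
        have hz'w : z' ≠ w := fun e => hz'T (e ▸ hwT)
        have hfuz' : f u ≠ f z' := by
          intro he
          have huz' : u ≠ z' := fun e => huC (e ▸ hz'C)
          exact hsing z' hz'C u huc huz' he
        have hfwz' : f w ≠ f z' := by rw [hfwu]; exact hfuz'
        have hHwz' : H.Adj w z' := (hf w hwc z' hz'c (Ne.symm hz'w)).mpr hfwz'
        have hGwz' : G.Adj w z' := ((hU z' hz'T w).mpr hHwz'.symm).symm
        have hGvz' : G.Adj v z' := ((htwwv.2 z' hz'w hz'v).mp hGwz'.symm).symm
        have hHvz' : H.Adj v z' := ((hU z' hz'T v).mp hGvz'.symm).symm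
        have hvc : v ∈ c.supp := mem_supp_of_adj hz'c hHvz'.symm
        have hvT : v ∉ T := by
          intro hvT
          obtain ⟨_, heq'⟩ := hkey v hvT hvc
          rw [twinClass_eq_of_mem hvDw] at heq'
          exact hvw (heq'.symm.trans hDwrep)
        have hHwv : H.Adj w v := ((hU v hvT w).mp hGwv.symm).symm
        have hfwv : f w ≠ f v := (hf w hwc v hvc hHwv.ne).mp hHwv
        have huv : u ≠ v := fun e => huDw (e ▸ hvDw)
        have hHuv : H.Adj u v := (hf u huc v hvc huv).mpr (by rw [← hfwu]; exact hfwv)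
        have hGuv : G.Adj u v := (hU u huT v).mpr hHuv
        have hGuw : G.Adj u w := (htwwv.2 u (Ne.symm hwu) huv).mpr hGuv
        exact hnGwu hGuw.symm
  rcases hL c with hclq | ⟨_, f, hf⟩
  · exact main (hclq ht0c hzc (Ne.symm hzt))
  · have hsing := s_single hU hf hC1 hC2 hC3 hunt hCc
    exact main ((hf t0 ht0c z hzc (Ne.symm hzt)).mpr (hsing z hzC t0 ht0c (Ne.symm hzt)))



variable {V : Type*} {G H : SimpleGraph V} {T : Set V} {ℓ : ℕ}

lemma count_S [Fintype V] (hℓ : 2 ≤ ℓ)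
    (hU : ∀ x, x ∉ T → ∀ y, G.Adj x y ↔ H.Adj x y)
    (hGnc : ∀ c : G.ConnectedComponent, ¬ (G.IsClique c.supp ∨ IsEllCliqueOn ℓ G c.supp))
    (hL : IsLCluster ℓ H) :
    {C ∈ twinClasses G | 2 ≤ C.ncard ∧ ∀ x ∈ C, ∀ y ∈ C, x ≠ y → G.Adj x y}.ncard
      ≤ T.ncard := by
  classical
  rcases isEmpty_or_nonempty V with hV | hV
  · have hempty : twinClasses G = ∅ := by
      unfold twinClasses
      exact Set.range_eq_empty _
    refine le_trans (Set.ncard_le_ncard (Set.sep_subset _ _) (Set.toFinite _)) ?_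
    simp [hempty]
  obtain ⟨v0⟩ := hV
  have hrepex : ∀ C : Set V, ∃ x : V, C ∈ twinClasses G → x ∈ C := by
    intro C
    by_cases h : C ∈ twinClasses G
    · obtain ⟨v, hv⟩ := h
      exact ⟨v, fun _ => hv ▸ mem_twinClass_self G v⟩
    · exact ⟨v0, fun hh => absurd hh h⟩
  choose rep hrep using hrepex
  have hrepTex : ∀ C : Set V, ∃ x : V, (C ∩ T).Nonempty → x ∈ C ∧ x ∈ T := by
    intro C
    by_cases h : (C ∩ T).Nonempty
    · exact ⟨h.choose, fun _ => h.choose_spec⟩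
    · exact ⟨v0, fun hh => absurd hh h⟩
  choose repT hrepT using hrepTex
  have hgoodex : ∀ C : Set V, ∃ t : V,
      (C ∈ twinClasses G ∧ 2 ≤ C.ncard ∧ (∀ x ∈ C, ∀ y ∈ C, x ≠ y → G.Adj x y) ∧
        ∀ v ∈ C, v ∉ T) →
      ((t ∈ T ∧ t ∈ (H.connectedComponentMk (rep C)).supp) ∧
        ∀ D : Set V, D ∈ twinClasses G → 2 ≤ D.ncard →
          (∀ x ∈ D, ∀ y ∈ D, x ≠ y → G.Adj x y) → (D ∩ T).Nonempty → repT D ≠ t) := by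
    intro C
    by_cases h : C ∈ twinClasses G ∧ 2 ≤ C.ncard ∧ (∀ x ∈ C, ∀ y ∈ C, x ≠ y → G.Adj x y) ∧
        ∀ v ∈ C, v ∉ T
    · obtain ⟨h1, h2, h3, h4⟩ := h
      have hCc : ∀ v ∈ C, v ∈ (H.connectedComponentMk (rep C)).supp := fun v hv => by
        rw [SimpleGraph.ConnectedComponent.mem_supp_iff]
        exact class_mk_eq hU hGnc h1 h4 hv (hrep C h1)
      obtain ⟨t, ht⟩ := s_good hU hGnc hL repT hrepT
        (comp_touched hU hGnc hL (H.connectedComponentMk (rep C))) h1 h2 h3 h4 hCc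
      exact ⟨t, fun _ => ht⟩
    · exact ⟨v0, fun hh => absurd hh h⟩
  choose good hgood using hgoodex
  apply Set.ncard_le_ncard_of_injOn
    (fun C => if ∀ v ∈ C, v ∉ T then good C else repT C)
  · rintro C ⟨hC1, hC2, hC3⟩
    by_cases h : ∀ v ∈ C, v ∉ T
    · rw [if_pos h]
      exact (hgood C ⟨hC1, hC2, hC3, h⟩).1.1
    · rw [if_neg h]
      push_neg at h
      obtain ⟨v, hv1, hv2⟩ := h
      exact (hrepT C ⟨v, hv1, hv2⟩).2
  · rintro C1 ⟨h11, h12, h13⟩ C2 ⟨h21, h22, h23⟩ heq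
    dsimp only at heq
    by_cases h1u : ∀ v ∈ C1, v ∉ T <;> by_cases h2u : ∀ v ∈ C2, v ∉ T
    · -- both untouched
      rw [if_pos h1u, if_pos h2u] at heq
      have sp1 := hgood C1 ⟨h11, h12, h13, h1u⟩
      have sp2 := hgood C2 ⟨h21, h22, h23, h2u⟩
      have hceq : H.connectedComponentMk (rep C1) = H.connectedComponentMk (rep C2) :=
        comp_eq_of_mem sp1.1.2 (heq ▸ sp2.1.2)
      have hs1 : rep C1 ∈ (H.connectedComponentMk (rep C1)).supp := mk_mem_supp H _
      have hs2 : rep C2 ∈ (H.connectedComponentMk (rep C1)).supp := by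
        rw [hceq]; exact mk_mem_supp H _
      have hCc1 : ∀ v ∈ C1, v ∈ (H.connectedComponentMk (rep C1)).supp := fun v hv => by
        rw [SimpleGraph.ConnectedComponent.mem_supp_iff]
        exact class_mk_eq hU hGnc h11 h1u hv (hrep C1 h11)
      have hCc2 : ∀ v ∈ C2, v ∈ (H.connectedComponentMk (rep C1)).supp := fun v hv => by
        rw [SimpleGraph.ConnectedComponent.mem_supp_iff, hceq]
        exact class_mk_eq hU hGnc h21 h2u hv (hrep C2 h21)
      by_cases hr : rep C1 = rep C2
      · exact untouched_class_eq hU h11 h21 h1u h2u (hrep C1 h11) (hrep C2 h21) (Or.inl hr)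
      · refine untouched_class_eq hU h11 h21 h1u h2u (hrep C1 h11) (hrep C2 h21) (Or.inr ?_)
        rcases hL (H.connectedComponentMk (rep C1)) with hclq | ⟨_, f, hf⟩
        · exact htwin_clique hclq hs1 hs2 hr
        · exact htwin_singles hf hs1 hs2 hr
            (s_single hU hf h11 h12 h13 h1u hCc1 (rep C1) (hrep C1 h11))
            (s_single hU hf h21 h22 h23 h2u hCc2 (rep C2) (hrep C2 h21))
    · -- C1 untouched, C2 touched
      rw [if_pos h1u, if_neg h2u] at heq
      push_neg at h2u
      obtain ⟨v, hv1, hv2⟩ := h2u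
      have sp1 := hgood C1 ⟨h11, h12, h13, h1u⟩
      exact absurd heq.symm (sp1.2 C2 h21 h22 h23 ⟨v, hv1, hv2⟩)
    · -- C1 touched, C2 untouched
      rw [if_neg h1u, if_pos h2u] at heq
      push_neg at h1u
      obtain ⟨v, hv1, hv2⟩ := h1u
      have sp2 := hgood C2 ⟨h21, h22, h23, h2u⟩
      exact absurd heq (sp2.2 C1 h11 h12 h13 ⟨v, hv1, hv2⟩)
    · -- both touched
      rw [if_neg h1u, if_neg h2u] at heq
      push_neg at h1u h2u
      obtain ⟨v1, hv11, hv12⟩ := h1u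
      obtain ⟨v2, hv21, hv22⟩ := h2u
      exact class_eq_class h11 h21 (hrepT C1 ⟨v1, hv11, hv12⟩).1
        (heq ▸ (hrepT C2 ⟨v2, hv21, hv22⟩).1)



variable {V : Type*} {G H : SimpleGraph V} {T : Set V} {ℓ : ℕ}

lemma p_good [Fintype V] (hℓ : 2 ≤ ℓ)
    (hU : ∀ x, x ∉ T → ∀ y, G.Adj x y ↔ H.Adj x y)
    (hGnc : ∀ c : G.ConnectedComponent, ¬ (G.IsClique c.supp ∨ IsEllCliqueOn ℓ G c.supp))
    (tC : H.ConnectedComponent → V)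
    (rep : Set V → V) (hrep : ∀ C ∈ twinClasses G, rep C ∈ C)
    (fsel : H.ConnectedComponent → V → Fin ℓ)
    (hfsel : ∀ c : H.ConnectedComponent, H.IsClique c.supp ∨
      (∀ x ∈ c.supp, ∀ y ∈ c.supp, x ≠ y → (H.Adj x y ↔ fsel c x ≠ fsel c y)))
    {r : V} (hrT : r ∈ T) (hrn : 2 ≤ (twinClass G r).ncard)
    (hall : ∀ u ∈ twinClass G r, u ∈ T → u = tC (H.connectedComponentMk u))
    (hrtC : r = tC (H.connectedComponentMk r)) :
    ∃ j : Fin ℓ, ∀ C : Set V, C ∈ twinClasses G → 2 ≤ C.ncard →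
      (∀ x ∈ C, ∀ y ∈ C, x ≠ y → ¬ G.Adj x y) → (∀ v ∈ C, v ∉ T) →
      H.connectedComponentMk (rep C) = H.connectedComponentMk r →
      fsel (H.connectedComponentMk r) (rep C) ≠ j := by
  by_contra hno
  push_neg at hno
  rcases hfsel (H.connectedComponentMk r) with hclq | hf
  · obtain ⟨C0, hC01, hC02, hC03, hC04, hC05, _⟩ := hno ⟨0, by omega⟩
    have hCc : ∀ v ∈ C0, v ∈ (H.connectedComponentMk r).supp := fun v hv => by
      rw [SimpleGraph.ConnectedComponent.mem_supp_iff,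
        class_mk_eq hU hGnc hC01 hC04 hv (hrep C0 hC01)]
      exact hC05
    exact p_notclique hU hclq hC02 hC03 hC04 hCc
  · haveI : Nontrivial (Fin ℓ) := Fin.nontrivial_iff_two_le.mpr hℓ
    have hrc : r ∈ (H.connectedComponentMk r).supp := mk_mem_supp H r
    have hrD : r ∈ twinClass G r := mem_twinClass_self G r
    obtain ⟨u, huD, hur⟩ :=
      Set.exists_ne_of_one_lt_ncard (show 1 < (twinClass G r).ncard by omega) r
    have htwru : IsTwinPair G r u := twin_of_mem hrD huD (Ne.symm hur)
    obtain ⟨j1, hj1⟩ := exists_ne (fsel (H.connectedComponentMk r) r)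
    obtain ⟨C1, hC11, hC12, hC13, hC14, hC15, hC16⟩ := hno j1
    have hCc1 : ∀ v ∈ C1, v ∈ (H.connectedComponentMk r).supp := fun v hv => by
      rw [SimpleGraph.ConnectedComponent.mem_supp_iff,
        class_mk_eq hU hGnc hC11 hC14 hv (hrep C1 hC11)]
      exact hC15
    have hfC1 : ∀ v ∈ C1, fsel (H.connectedComponentMk r) v = j1 := fun v hv => by
      rw [← hC16]
      exact p_samepart hU hf hC13 hC14 hCc1 hv (hrep C1 hC11)
    obtain ⟨z, hzC1, hzu⟩ := Set.exists_ne_of_one_lt_ncard (show 1 < C1.ncard by omega) u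
    have hzT : z ∉ T := hC14 z hzC1
    have hzc := hCc1 z hzC1
    have hzr : z ≠ r := fun e => hzT (e ▸ hrT)
    have hHrz : H.Adj r z := (hf r hrc z hzc (Ne.symm hzr)).mpr
      (by rw [hfC1 z hzC1]; exact Ne.symm hj1)
    have hGrz : G.Adj r z := ((hU z hzT r).mpr hHrz.symm).symm
    have hGuz : G.Adj u z := ((htwru.2 z hzr hzu).mp hGrz.symm).symm
    have hHuz : H.Adj u z := ((hU z hzT u).mp hGuz.symm).symm
    have huc : u ∈ (H.connectedComponentMk r).supp := mem_supp_of_adj hzc hHuz.symm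
    have huT : u ∉ T := by
      intro huT
      have h1 := hall u huD huT
      rw [SimpleGraph.ConnectedComponent.mem_supp_iff] at huc
      rw [huc] at h1
      exact hur (h1.trans hrtC.symm)
    obtain ⟨C2, hC21, hC22, hC23, hC24, hC25, hC26⟩ :=
      hno (fsel (H.connectedComponentMk r) u)
    have hCc2 : ∀ v ∈ C2, v ∈ (H.connectedComponentMk r).supp := fun v hv => by
      rw [SimpleGraph.ConnectedComponent.mem_supp_iff,
        class_mk_eq hU hGnc hC21 hC24 hv (hrep C2 hC21)]
      exact hC25
    have hfC2 : ∀ v ∈ C2, fsel (H.connectedComponentMk r) v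
        = fsel (H.connectedComponentMk r) u := fun v hv => by
      rw [← hC26]
      exact p_samepart hU hf hC23 hC24 hCc2 hv (hrep C2 hC21)
    have huC2 : u ∉ C2 := by
      intro h
      have h1 : twinClass G u = C2 := class_self_eq hC21 h
      have h2 : twinClass G u = twinClass G r := twinClass_eq_of_mem huD
      exact hC24 r (by rw [← h1, h2]; exact hrD) hrT
    have hx := hrep C2 hC21
    have hxu : rep C2 ≠ u := fun e => huC2 (e ▸ hx)
    have hxc := hCc2 _ hx
    have htwH : IsTwinPair H (rep C2) u :=
      htwin_samepart hf hxc huc hxu (hfC2 _ hx)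
    have htwG : IsTwinPair G (rep C2) u := (twin_transfer hU (hC24 _ hx) huT).mpr htwH
    have hu2 : u ∈ twinClass G (rep C2) := Or.inr htwG
    rw [class_self_eq hC21 hx] at hu2
    exact huC2 hu2



variable {V : Type*} {G H : SimpleGraph V} {T : Set V} {ℓ : ℕ}

lemma count_P [Fintype V] (hℓ : 2 ≤ ℓ)
    (hU : ∀ x, x ∉ T → ∀ y, G.Adj x y ↔ H.Adj x y)
    (hGnc : ∀ c : G.ConnectedComponent, ¬ (G.IsClique c.supp ∨ IsEllCliqueOn ℓ G c.supp))
    (hL : IsLCluster ℓ H) :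
    {C ∈ twinClasses G | 2 ≤ C.ncard ∧ ∀ x ∈ C, ∀ y ∈ C, x ≠ y → ¬ G.Adj x y}.ncard
      ≤ T.ncard * ℓ := by
  classical
  rcases isEmpty_or_nonempty V with hV | hV
  · have hempty : twinClasses G = ∅ := by
      unfold twinClasses
      exact Set.range_eq_empty _
    refine le_trans (Set.ncard_le_ncard (Set.sep_subset _ _) (Set.toFinite _)) ?_
    simp [hempty]
  obtain ⟨v0⟩ := hV
  choose tC htC1 htC2 using comp_touched hU hGnc hL
  have hrepex : ∀ C : Set V, ∃ x : V, C ∈ twinClasses G → x ∈ C := by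
    intro C
    by_cases h : C ∈ twinClasses G
    · obtain ⟨v, hv⟩ := h
      exact ⟨v, fun _ => hv ▸ mem_twinClass_self G v⟩
    · exact ⟨v0, fun hh => absurd hh h⟩
  choose rep hrep using hrepex
  have hrepTex : ∀ C : Set V, ∃ x : V, (C ∩ T).Nonempty → x ∈ C ∧ x ∈ T := by
    intro C
    by_cases h : (C ∩ T).Nonempty
    · exact ⟨h.choose, fun _ => h.choose_spec⟩
    · exact ⟨v0, fun hh => absurd hh h⟩
  choose repT hrepT using hrepTex
  have hselex : ∀ c : H.ConnectedComponent, ∃ f : V → Fin ℓ,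
      H.IsClique c.supp ∨ (∀ x ∈ c.supp, ∀ y ∈ c.supp, x ≠ y → (H.Adj x y ↔ f x ≠ f y)) := by
    intro c
    rcases hL c with h | ⟨_, f, hf⟩
    · exact ⟨fun _ => ⟨0, by omega⟩, Or.inl h⟩
    · exact ⟨f, Or.inr hf⟩
  choose fsel hfsel using hselex
  have hjBex : ∀ r : V, ∃ j : Fin ℓ,
      (r ∈ T ∧ 2 ≤ (twinClass G r).ncard ∧
        (∀ u ∈ twinClass G r, u ∈ T → u = tC (H.connectedComponentMk u)) ∧
        r = tC (H.connectedComponentMk r)) →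
      ∀ C : Set V, C ∈ twinClasses G → 2 ≤ C.ncard →
        (∀ x ∈ C, ∀ y ∈ C, x ≠ y → ¬ G.Adj x y) → (∀ v ∈ C, v ∉ T) →
        H.connectedComponentMk (rep C) = H.connectedComponentMk r →
        fsel (H.connectedComponentMk r) (rep C) ≠ j := by
    intro r
    by_cases h : r ∈ T ∧ 2 ≤ (twinClass G r).ncard ∧
        (∀ u ∈ twinClass G r, u ∈ T → u = tC (H.connectedComponentMk u)) ∧
        r = tC (H.connectedComponentMk r)
    · obtain ⟨h1, h2, h3, h4⟩ := h
      obtain ⟨j, hj⟩ := p_good hℓ hU hGnc tC rep hrep fsel hfsel h1 h2 h3 h4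
      exact ⟨j, fun _ => hj⟩
    · exact ⟨⟨0, by omega⟩, fun hh => absurd hh h⟩
  choose jB hjB using hjBex
  have hwAex : ∀ C : Set V, ∃ u : V,
      (∃ w ∈ C, w ∈ T ∧ w ≠ tC (H.connectedComponentMk w)) →
      (u ∈ C ∧ u ∈ T ∧ u ≠ tC (H.connectedComponentMk u)) := by
    intro C
    by_cases h : ∃ w ∈ C, w ∈ T ∧ w ≠ tC (H.connectedComponentMk w)
    · obtain ⟨w, hw1, hw2, hw3⟩ := h
      exact ⟨w, fun _ => ⟨hw1, hw2, hw3⟩⟩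
    · exact ⟨v0, fun hh => absurd hh h⟩
  choose wA hwA using hwAex
  rw [← prod_ncard T ℓ]
  apply Set.ncard_le_ncard_of_injOn (fun C =>
    if ∀ v ∈ C, v ∉ T then
      ((tC (H.connectedComponentMk (rep C)), fsel (H.connectedComponentMk (rep C)) (rep C)) :
        V × Fin ℓ)
    else if ∃ w ∈ C, w ∈ T ∧ w ≠ tC (H.connectedComponentMk w) then
      (wA C, (⟨0, by omega⟩ : Fin ℓ))
    else (repT C, jB (repT C)))
  · rintro C ⟨hC1, hC2, hC3⟩
    by_cases h : ∀ v ∈ C, v ∉ T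
    · rw [if_pos h]
      exact ⟨htC2 _, Set.mem_univ _⟩
    · rw [if_neg h]
      by_cases hA : ∃ w ∈ C, w ∈ T ∧ w ≠ tC (H.connectedComponentMk w)
      · rw [if_pos hA]
        exact ⟨(hwA C hA).2.1, Set.mem_univ _⟩
      · rw [if_neg hA]
        push_neg at h
        obtain ⟨v, hv1, hv2⟩ := h
        exact ⟨(hrepT C ⟨v, hv1, hv2⟩).2, Set.mem_univ _⟩
  · rintro C1 ⟨h11, h12, h13⟩ C2 ⟨h21, h22, h23⟩ heq
    dsimp only at heq
    by_cases u1 : ∀ v ∈ C1, v ∉ T <;> by_cases u2 : ∀ v ∈ C2, v ∉ T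
    · -- both untouched
      rw [if_pos u1, if_pos u2, Prod.mk.injEq] at heq
      obtain ⟨heq1, heq2⟩ := heq
      have hceq : H.connectedComponentMk (rep C1) = H.connectedComponentMk (rep C2) :=
        comp_eq_of_mem (htC1 (H.connectedComponentMk (rep C1)))
          (heq1 ▸ htC1 (H.connectedComponentMk (rep C2)))
      have hCc1 : ∀ v ∈ C1, v ∈ (H.connectedComponentMk (rep C1)).supp := fun v hv => by
        rw [SimpleGraph.ConnectedComponent.mem_supp_iff]
        exact class_mk_eq hU hGnc h11 u1 hv (hrep C1 h11)
      have hCc2 : ∀ v ∈ C2, v ∈ (H.connectedComponentMk (rep C1)).supp := fun v hv => by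
        rw [SimpleGraph.ConnectedComponent.mem_supp_iff, hceq]
        exact class_mk_eq hU hGnc h21 u2 hv (hrep C2 h21)
      rcases hfsel (H.connectedComponentMk (rep C1)) with hclq | hf
      · exact absurd (p_notclique hU hclq h12 h13 u1 hCc1) (fun h => h)
      · by_cases hr : rep C1 = rep C2
        · exact untouched_class_eq hU h11 h21 u1 u2 (hrep C1 h11) (hrep C2 h21) (Or.inl hr)
        · refine untouched_class_eq hU h11 h21 u1 u2 (hrep C1 h11) (hrep C2 h21) (Or.inr ?_)
          refine htwin_samepart hf (hCc1 _ (hrep C1 h11)) (hCc2 _ (hrep C2 h21)) hr ?_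
          rw [heq2, hceq]
    · -- C1 untouched, C2 touched
      rw [if_pos u1, if_neg u2] at heq
      by_cases hA2 : ∃ w ∈ C2, w ∈ T ∧ w ≠ tC (H.connectedComponentMk w)
      · rw [if_pos hA2, Prod.mk.injEq] at heq
        obtain ⟨heq1, _⟩ := heq
        obtain ⟨_, _, hwA3⟩ := hwA C2 hA2
        have hmks : H.connectedComponentMk (wA C2) = H.connectedComponentMk (rep C1) := by
          rw [← SimpleGraph.ConnectedComponent.mem_supp_iff, ← heq1]
          exact htC1 _
        rw [hmks] at hwA3
        exact absurd heq1.symm hwA3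
      · rw [if_neg hA2, Prod.mk.injEq] at heq
        obtain ⟨heq1, heq2⟩ := heq
        push_neg at u2
        obtain ⟨v, hv1, hv2⟩ := u2
        have hrmem : repT C2 ∈ C2 := (hrepT C2 ⟨v, hv1, hv2⟩).1
        have hrT : repT C2 ∈ T := (hrepT C2 ⟨v, hv1, hv2⟩).2
        have hclsr : twinClass G (repT C2) = C2 := class_self_eq h21 hrmem
        have hmkr : H.connectedComponentMk (repT C2) = H.connectedComponentMk (rep C1) := by
          rw [← SimpleGraph.ConnectedComponent.mem_supp_iff, ← heq1]
          exact htC1 _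
        push_neg at hA2
        have hcon := hjB (repT C2) ⟨hrT, by rw [hclsr]; exact h22,
          by rw [hclsr]; exact hA2, by rw [hmkr, ← heq1]⟩ C1 h11 h12 h13 u1 hmkr.symm
        rw [hmkr] at hcon
        exact absurd heq2 hcon
    · -- C1 touched, C2 untouched
      rw [if_neg u1, if_pos u2] at heq
      by_cases hA1 : ∃ w ∈ C1, w ∈ T ∧ w ≠ tC (H.connectedComponentMk w)
      · rw [if_pos hA1, Prod.mk.injEq] at heq
        obtain ⟨heq1, _⟩ := heq
        obtain ⟨_, _, hwA3⟩ := hwA C1 hA1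
        have hmks : H.connectedComponentMk (wA C1) = H.connectedComponentMk (rep C2) := by
          rw [← SimpleGraph.ConnectedComponent.mem_supp_iff, heq1]
          exact htC1 _
        rw [hmks] at hwA3
        exact absurd heq1 hwA3
      · rw [if_neg hA1, Prod.mk.injEq] at heq
        obtain ⟨heq1, heq2⟩ := heq
        push_neg at u1
        obtain ⟨v, hv1, hv2⟩ := u1
        have hrmem : repT C1 ∈ C1 := (hrepT C1 ⟨v, hv1, hv2⟩).1
        have hrT : repT C1 ∈ T := (hrepT C1 ⟨v, hv1, hv2⟩).2
        have hclsr : twinClass G (repT C1) = C1 := class_self_eq h11 hrmem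
        have hmkr : H.connectedComponentMk (repT C1) = H.connectedComponentMk (rep C2) := by
          rw [← SimpleGraph.ConnectedComponent.mem_supp_iff, heq1]
          exact htC1 _
        push_neg at hA1
        have hcon := hjB (repT C1) ⟨hrT, by rw [hclsr]; exact h12,
          by rw [hclsr]; exact hA1, by rw [hmkr, heq1]⟩ C2 h21 h22 h23 u2 hmkr.symm
        rw [hmkr] at hcon
        exact absurd heq2.symm hcon
    · -- both touched
      rw [if_neg u1, if_neg u2] at heq
      have hm1 : (if ∃ w ∈ C1, w ∈ T ∧ w ≠ tC (H.connectedComponentMk w) then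
          ((wA C1, (⟨0, by omega⟩ : Fin ℓ)) : V × Fin ℓ) else (repT C1, jB (repT C1))).1 ∈ C1 := by
        by_cases hA1 : ∃ w ∈ C1, w ∈ T ∧ w ≠ tC (H.connectedComponentMk w)
        · rw [if_pos hA1]
          exact (hwA C1 hA1).1
        · rw [if_neg hA1]
          push_neg at u1
          obtain ⟨v, hv1, hv2⟩ := u1
          exact (hrepT C1 ⟨v, hv1, hv2⟩).1
      have hm2 : (if ∃ w ∈ C2, w ∈ T ∧ w ≠ tC (H.connectedComponentMk w) then
          ((wA C2, (⟨0, by omega⟩ : Fin ℓ)) : V × Fin ℓ) else (repT C2, jB (repT C2))).1 ∈ C2 := by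
        by_cases hA2 : ∃ w ∈ C2, w ∈ T ∧ w ≠ tC (H.connectedComponentMk w)
        · rw [if_pos hA2]
          exact (hwA C2 hA2).1
        · rw [if_neg hA2]
          push_neg at u2
          obtain ⟨v, hv1, hv2⟩ := u2
          exact (hrepT C2 ⟨v, hv1, hv2⟩).1
      exact class_eq_class h11 h21 hm1 (by rw [heq]; exact hm2)


end EditAux
end EditAuxSection

/-- Theorem 6: if `G` has no clique or `ℓ`-clique component and `k` edge editions turn it
into an `L`-cluster graph, then `Q(G) ≤ (2ℓ+2)k`, `P(G) ≤ 2ℓk` and `S(G) ≤ 2k`. -/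
theorem k_editions_kernel_bounds [Fintype V] (ℓ k : ℕ) (hℓ : 2 ≤ ℓ) (G : SimpleGraph V)
    (hG : ∀ c : G.ConnectedComponent,
      ¬ (G.IsClique c.supp ∨ IsEllCliqueOn ℓ G c.supp))
    (hex : ∃ F : Finset (Sym2 V), IsEditionSet F ∧ F.card = k ∧
      IsLCluster ℓ (editGraph G F)) :
    Qcount G ≤ (2 * ℓ + 2) * k ∧ Pcount G ≤ 2 * ℓ * k ∧ Scount G ≤ 2 * k := by
  classical
  obtain ⟨F, hF, hFcard, hL⟩ := hex
  have hU : ∀ x, x ∉ {v : V | ∃ e ∈ F, v ∈ e} → ∀ y, G.Adj x y ↔ (editGraph G F).Adj x y :=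
    fun x hx y => EditAux.untouched_adj hF hx y
  have hT2k : {v : V | ∃ e ∈ F, v ∈ e}.ncard ≤ 2 * k := by
    rw [← hFcard]
    exact EditAux.touched_card F
  have hQ := EditAux.count_Q hℓ hU hG hL
  have hP := EditAux.count_P hℓ hU hG hL
  have hS := EditAux.count_S hℓ hU hG hL
  refine ⟨?_, ?_, ?_⟩
  · unfold Qcount
    calc (twinClasses G).ncard
        ≤ {v : V | ∃ e ∈ F, v ∈ e}.ncard + {v : V | ∃ e ∈ F, v ∈ e}.ncard * ℓ := hQ
      _ ≤ 2 * k + (2 * k) * ℓ := Nat.add_le_add hT2k (Nat.mul_le_mul_right ℓ hT2k)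
      _ = (2 * ℓ + 2) * k := by ring
  · unfold Pcount
    calc {C ∈ twinClasses G | 2 ≤ C.ncard ∧ ∀ x ∈ C, ∀ y ∈ C, x ≠ y → ¬ G.Adj x y}.ncard
        ≤ {v : V | ∃ e ∈ F, v ∈ e}.ncard * ℓ := hP
      _ ≤ (2 * k) * ℓ := Nat.mul_le_mul_right ℓ hT2k
      _ = 2 * ℓ * k := by ring
  · unfold Scount
    calc {C ∈ twinClasses G | 2 ≤ C.ncard ∧ ∀ x ∈ C, ∀ y ∈ C, x ≠ y → G.Adj x y}.ncard
        ≤ {v : V | ∃ e ∈ F, v ∈ e}.ncard := hS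
      _ ≤ 2 * k := hT2k
end

section
/- Let ℓ ≥ 2, let k ≥ 0 be an integer, and let G be a finite simple graph none of whose connected components is a clique or an ℓ-clique. If F is an edition set for G with |F| ≤ k such that G+F is an L-cluster graph, then G+F has at most 2k connected components. -/
open SimpleGraph

variable {V : Type*}

/-- If `G` has no clique or `ℓ`-clique component and `G + F` is an `L`-cluster graph with
`|F| ≤ k`, then `G + F` has at most `2k` connected components. -/
theorem components_le_two_k [Fintype V] (ℓ k : ℕ) (hℓ : 2 ≤ ℓ) (G : SimpleGraph V)
    (hG : ∀ c : G.ConnectedComponent,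
      ¬ (G.IsClique c.supp ∨ IsEllCliqueOn ℓ G c.supp))
    (F : Finset (Sym2 V)) (hF : IsEditionSet F) (hk : F.card ≤ k)
    (hL : IsLCluster ℓ (editGraph G F)) :
    Nat.card (editGraph G F).ConnectedComponent ≤ 2 * k := by
  classical
  set G' := editGraph G F with hG'def
  -- adjacency of untouched vertices is unchanged
  have adjIff : ∀ x y : V, (∀ e ∈ F, x ∉ e) → (G'.Adj x y ↔ G.Adj x y) := by
    intro x y hx
    have hnF : s(x, y) ∉ (F : Set (Sym2 V)) := by
      intro h
      exact hx _ (Finset.mem_coe.mp h) (Sym2.mem_mk_left x y)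
    constructor
    · rintro ⟨hmem, hne⟩
      rcases Set.mem_symmDiff.mp hmem with ⟨h1, -⟩ | ⟨h2, -⟩
      · exact h1
      · exact absurd h2 hnF
    · intro h
      refine ⟨Set.mem_symmDiff.mpr (Or.inl ⟨h, hnF⟩), h.ne⟩
  -- every component of G' contains an endpoint of F
  have key : ∀ c : G'.ConnectedComponent,
      ∃ v, G'.connectedComponentMk v = c ∧ ∃ e ∈ F, v ∈ e := by
    intro c
    by_contra hcon
    push_neg at hcon
    have hU : ∀ v ∈ c.supp, ∀ e ∈ F, v ∉ e := by
      intro v hv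
      exact hcon v ((ConnectedComponent.mem_supp_iff c v).mp hv)
    have fwd : ∀ x y : V, (w : G'.Walk x y) → x ∈ c.supp → G.Reachable x y := by
      intro x y w
      induction w with
      | nil => intro _; exact Reachable.refl _
      | @cons a b d h w ih =>
        intro hx
        have hb : b ∈ c.supp := by
          rw [ConnectedComponent.mem_supp_iff] at hx ⊢
          rw [← hx]
          exact ConnectedComponent.eq.mpr h.symm.reachable
        exact ((adjIff a b (hU a hx)).mp h).reachable.trans (ih hb)
    have bwd : ∀ x y : V, (w : G.Walk x y) → x ∈ c.supp →
        G'.Reachable x y ∧ y ∈ c.supp := by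
      intro x y w
      induction w with
      | nil => intro hx; exact ⟨Reachable.refl _, hx⟩
      | @cons a b d h w ih =>
        intro hx
        have hab : G'.Adj a b := (adjIff a b (hU a hx)).mpr h
        have hb : b ∈ c.supp := by
          rw [ConnectedComponent.mem_supp_iff] at hx ⊢
          rw [← hx]
          exact ConnectedComponent.eq.mpr hab.symm.reachable
        obtain ⟨hr, hd⟩ := ih hb
        exact ⟨hab.reachable.trans hr, hd⟩
    obtain ⟨v, hv⟩ := c.exists_rep
    have hvc : v ∈ c.supp := (ConnectedComponent.mem_supp_iff c v).mpr hv
    set c' := G.connectedComponentMk v with hc'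
    have hsupp : c'.supp = c.supp := by
      ext x
      rw [ConnectedComponent.mem_supp_iff, hc', ConnectedComponent.eq]
      constructor
      · intro hr
        exact (bwd v x hr.symm.some hvc).2
      · intro hx
        have hr : G'.Reachable x v := by
          rw [← ConnectedComponent.eq]
          rw [ConnectedComponent.mem_supp_iff] at hx
          rw [hx]
          exact hv.symm
        exact fwd x v hr.some hx
    refine hG c' ?_
    rcases hL c with hclique | ⟨hconn, f, hf⟩
    · left
      rw [hsupp]
      intro x hx y hy hxy
      exact (adjIff x y (hU x hx)).mp (hclique hx hy hxy)
    · right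
      rw [hsupp] at *
      refine ⟨?_, f, ?_⟩
      · have hind : G.induce (c.supp : Set V) = G'.induce (c.supp : Set V) := by
          ext ⟨x, hx⟩ ⟨y, hy⟩
          simp only [comap_adj, Function.Embedding.coe_subtype]
          exact (adjIff x y (hU x hx)).symm
        rw [hind]
        exact hconn
      · intro x hx y hy hxy
        rw [← adjIff x y (hU x hx)]
        exact hf x hx y hy hxy
  -- endpoints of F
  set T : Finset V := F.biUnion (fun e => Finset.univ.filter (· ∈ e)) with hT
  have hTcard : T.card ≤ 2 * k := by
    calc T.card ≤ ∑ e ∈ F, (Finset.univ.filter (· ∈ e)).card :=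
          Finset.card_biUnion_le
      _ ≤ ∑ _e ∈ F, 2 := by
          refine Finset.sum_le_sum ?_
          intro e _
          induction e using Sym2.inductionOn with
          | hf a b =>
            calc (Finset.univ.filter (· ∈ s(a, b))).card ≤ ({a, b} : Finset V).card := by
                  refine Finset.card_le_card ?_
                  intro x hx
                  simp only [Finset.mem_filter, Sym2.mem_iff] at hx
                  rcases hx.2 with rfl | rfl <;> simp
              _ ≤ 2 := Finset.card_insert_le a {b} |>.trans (by simp)
      _ = 2 * F.card := by rw [Finset.sum_const, smul_eq_mul, mul_comm]
      _ ≤ 2 * k := by omega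
  -- injection from components into T
  have : Nat.card G'.ConnectedComponent ≤ Nat.card {x // x ∈ T} := by
    refine Nat.card_le_card_of_injective
      (fun c => ⟨(key c).choose, ?_⟩) ?_
    · obtain ⟨-, e, he, hve⟩ := (key c).choose_spec
      rw [hT, Finset.mem_biUnion]
      exact ⟨e, he, by simp [hve]⟩
    · intro c₁ c₂ h
      have h1 := (key c₁).choose_spec.1
      have h2 := (key c₂).choose_spec.1
      rw [← h1, ← h2]
      exact congrArg G'.connectedComponentMk (congrArg Subtype.val h)
  have hcT : Nat.card {x // x ∈ T} = T.card := by
    rw [Nat.card_eq_fintype_card, Fintype.card_coe]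
  rw [hcT] at this
  exact this.trans hTcard
end

section
/- Let ℓ ≥ 2, let k ≥ 0 be an integer, let G be a finite simple graph, and let M be a twin class of G of size greater than ℓ+k whose vertices are pairwise true twins (an S-vertex of G_Q, inducing a clique). Then for every edition set F for G with |F| ≤ k such that G+F is an L-cluster graph, no pair of F has an endpoint in M. -/
open SimpleGraph

variable {V : Type*}

lemma edit_adj_iff {G : SimpleGraph V} {F : Finset (Sym2 V)} {x y : V} (hxy : x ≠ y) :
    (editGraph G F).Adj x y ↔
      ((G.Adj x y ∧ s(x,y) ∉ F) ∨ (s(x,y) ∈ F ∧ ¬ G.Adj x y)) := by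
  simp only [editGraph, fromEdgeSet_adj, Set.mem_symmDiff, mem_edgeSet, Finset.mem_coe]
  tauto

lemma edit_adj_of_not_mem {G : SimpleGraph V} {F : Finset (Sym2 V)} {x y : V}
    (hxy : x ≠ y) (h : s(x,y) ∉ F) : (editGraph G F).Adj x y ↔ G.Adj x y := by
  rw [edit_adj_iff hxy]; tauto

lemma edit_adj_of_mem {G : SimpleGraph V} {F : Finset (Sym2 V)} {x y : V}
    (hxy : x ≠ y) (h : s(x,y) ∈ F) : (editGraph G F).Adj x y ↔ ¬ G.Adj x y := by
  rw [edit_adj_iff hxy]; tauto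

/-- If `M` is a twin class of `G` of size greater than `ℓ + k` whose vertices are pairwise
true twins, then no `L`-cluster-editing set of size at most `k` touches `M`. -/
theorem large_sVertex_untouched [Fintype V] (ℓ k : ℕ) (hℓ : 2 ≤ ℓ) (G : SimpleGraph V)
    (M : Set V) (hM : ∃ v, M = twinClass G v) (hsize : ℓ + k < M.ncard)
    (hclique : ∀ x ∈ M, ∀ y ∈ M, x ≠ y → G.Adj x y) :
    ∀ F : Finset (Sym2 V), IsEditionSet F → F.card ≤ k →
      IsLCluster ℓ (editGraph G F) →
      ∀ e ∈ F, ∀ v, v ∈ e → v ∉ M := by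
  classical
  intro F hEd hFk hL e he a hae haM
  obtain ⟨v0, hMv⟩ := hM
  have hv0 : v0 ∈ M := by rw [hMv]; exact Or.inl rfl
  set H := editGraph G F with hH
  induction e using Sym2.ind with
  | _ x y =>
  have hxy : x ≠ y := by
    have := hEd _ he
    simpa [Sym2.mk_isDiag_iff] using this
  obtain ⟨b, hab, heq⟩ : ∃ b, a ≠ b ∧ s(a, b) = s(x, y) := by
    rcases Sym2.mem_iff.mp hae with rfl | rfl
    · exact ⟨y, hxy, rfl⟩
    · exact ⟨x, fun h => hxy h.symm, Sym2.eq_swap⟩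
  have heF : s(a,b) ∈ F := heq ▸ he
  clear heq he hae hxy
  -- finite version of M
  have hMfin : M.Finite := Set.toFinite M
  set Mf : Finset V := hMfin.toFinset with hMfdef
  have hmem : ∀ z, z ∈ Mf ↔ z ∈ M := fun z => hMfin.mem_toFinset
  have hcard : ℓ + k < Mf.card := by
    rwa [Set.ncard_eq_toFinset_card M hMfin] at hsize
  -- adjacency from outside M to M is uniform
  have hbv : ∀ c, c ∉ M → ∀ x ∈ M, G.Adj c x → G.Adj c v0 := by
    intro c hc x hx hcx
    have hcv0 : c ≠ v0 := fun h => hc (h ▸ hv0)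
    have hcx' : c ≠ x := G.ne_of_adj hcx
    rw [hMv] at hx
    rcases hx with rfl | htw
    · exact hcx
    · exact (htw.2 c hcv0 hcx').mpr hcx
  have huni : ∀ c, c ∉ M → ∀ x ∈ M, ∀ y ∈ M, G.Adj c x → G.Adj c y := by
    intro c hc x hx y hy hcx
    have h0 := hbv c hc x hx hcx
    have hcv0 : c ≠ v0 := fun h => hc (h ▸ hv0)
    have hcy : c ≠ y := fun h => hc (h ▸ hy)
    rw [hMv] at hy
    rcases hy with rfl | htw
    · exact h0
    · exact (htw.2 c hcv0 hcy).mp h0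
  -- all of M lies in one connected component of H
  have hreach : ∀ x ∈ M, H.Reachable x v0 := by
    intro x hx
    by_cases hxv : x = v0
    · exact hxv ▸ Reachable.refl x
    by_cases hxF : s(x, v0) ∈ F
    · have hz : ∃ z ∈ M, z ≠ x ∧ z ≠ v0 ∧ s(x,z) ∉ F ∧ s(v0,z) ∉ F := by
        by_contra hcon
        push_neg at hcon
        have hmapsto : ∀ z ∈ (Mf.erase x).erase v0,
            (if s(x,z) ∈ F then s(x,z) else s(v0,z)) ∈ F := by
          intro z hz
          have hzv : z ≠ v0 := Finset.ne_of_mem_erase hz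
          have hzx : z ≠ x := Finset.ne_of_mem_erase (Finset.mem_of_mem_erase hz)
          have hzM : z ∈ M :=
            (hmem z).mp (Finset.mem_of_mem_erase (Finset.mem_of_mem_erase hz))
          by_cases h1 : s(x,z) ∈ F
          · simp [h1]
          · simp only [h1, if_false]
            exact hcon z hzM hzx hzv h1
        have hinj : Set.InjOn (fun z => if s(x,z) ∈ F then s(x,z) else s(v0,z))
            ((Mf.erase x).erase v0) := by
          intro z hz w hw hzw
          simp only at hzw
          have hzv : z ≠ v0 := Finset.ne_of_mem_erase hz
          have hzx : z ≠ x := Finset.ne_of_mem_erase (Finset.mem_of_mem_erase hz)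
          have hwv : w ≠ v0 := Finset.ne_of_mem_erase hw
          have hwx : w ≠ x := Finset.ne_of_mem_erase (Finset.mem_of_mem_erase hw)
          split_ifs at hzw <;> rw [Sym2.eq_iff] at hzw <;> tauto
        have hle : ((Mf.erase x).erase v0).card ≤ k :=
          le_trans (Finset.card_le_card_of_injOn _ hmapsto hinj) hFk
        have hxMf : x ∈ Mf := (hmem x).mpr hx
        have hvMf : v0 ∈ (Mf.erase x) := Finset.mem_erase.mpr ⟨fun h => hxv h.symm, (hmem v0).mpr hv0⟩
        have e1 : ((Mf.erase x).erase v0).card = (Mf.erase x).card - 1 :=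
          Finset.card_erase_of_mem hvMf
        have e2 : (Mf.erase x).card = Mf.card - 1 := Finset.card_erase_of_mem hxMf
        omega
      obtain ⟨z, hzM, hzx, hzv, h1, h2⟩ := hz
      have hA1 : H.Adj x z :=
        (edit_adj_of_not_mem (Ne.symm hzx) h1).mpr (hclique x hx z hzM (Ne.symm hzx))
      have hA2 : H.Adj v0 z :=
        (edit_adj_of_not_mem (Ne.symm hzv) h2).mpr (hclique v0 hv0 z hzM (Ne.symm hzv))
      exact hA1.reachable.trans hA2.symm.reachable
    · exact ((edit_adj_of_not_mem hxv hxF).mpr (hclique x hx v0 hv0 hxv)).reachable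
  set C := H.connectedComponentMk v0 with hC
  have hsupp : ∀ x ∈ M, x ∈ C.supp := by
    intro x hx
    rw [ConnectedComponent.mem_supp_iff]
    exact ConnectedComponent.sound (hreach x hx)
  rcases hL C with hcl | ⟨_, f, hf⟩
  · -- clique component
    by_cases hbM : b ∈ M
    · have hGab : G.Adj a b := hclique a haM b hbM hab
      have hHab : H.Adj a b := hcl (hsupp a haM) (hsupp b hbM) hab
      exact ((edit_adj_of_mem hab heF).mp hHab) hGab
    · by_cases hGba : G.Adj b a
      · have hm : ∃ m ∈ M, s(b,m) ∉ F := by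
          by_contra hcon
          push_neg at hcon
          have hinj : Set.InjOn (fun m => s(b,m)) Mf := by
            intro z hz w hw hzw
            simp only [Sym2.eq_iff] at hzw
            rcases hzw with ⟨_, h⟩ | ⟨hb1, hb2⟩
            · exact h
            · exact absurd (hb2 ▸ (hmem z).mp hz) hbM
          have : Mf.card ≤ k :=
            le_trans (Finset.card_le_card_of_injOn (fun m => s(b,m))
              (fun m hmm => hcon m ((hmem m).mp hmm)) hinj) hFk
          omega
        obtain ⟨m, hmM, hmF⟩ := hm
        have hbm : b ≠ m := fun h => hbM (h ▸ hmM)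
        have hGbm : G.Adj b m := huni b hbM a haM m hmM hGba
        have hHbm : H.Adj b m := (edit_adj_of_not_mem hbm hmF).mpr hGbm
        have hbC : b ∈ C.supp := by
          rw [ConnectedComponent.mem_supp_iff]
          exact ConnectedComponent.sound (hHbm.reachable.trans (hreach m hmM))
        have hHab : H.Adj a b := hcl (hsupp a haM) hbC hab
        exact ((edit_adj_of_mem hab heF).mp hHab) hGba.symm
      · have hGab : ¬ G.Adj a b := fun h => hGba h.symm
        have hHab : H.Adj a b := (edit_adj_of_mem hab heF).mpr hGab
        have hbC : b ∈ C.supp := by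
          rw [ConnectedComponent.mem_supp_iff]
          exact ConnectedComponent.sound (hHab.symm.reachable.trans (hreach a haM))
        have hmaps : ∀ m ∈ Mf, s(b,m) ∈ F := by
          intro m hmm
          have hmM : m ∈ M := (hmem m).mp hmm
          have hbm : b ≠ m := fun h => hbM (h ▸ hmM)
          have hHbm : H.Adj b m := hcl hbC (hsupp m hmM) hbm
          have hGbm : ¬ G.Adj b m := fun h => hGba (huni b hbM m hmM a haM h)
          have := (edit_adj_iff hbm).mp hHbm
          tauto
        have hinj : Set.InjOn (fun m => s(b,m)) Mf := by
          intro z hz w hw hzw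
          simp only [Sym2.eq_iff] at hzw
          rcases hzw with ⟨_, h⟩ | ⟨hb1, hb2⟩
          · exact h
          · exact absurd (hb2 ▸ (hmem z).mp hz) hbM
        have : Mf.card ≤ k :=
          le_trans (Finset.card_le_card_of_injOn (fun m => s(b,m)) hmaps hinj) hFk
        omega
  · -- ℓ-clique component
    have hmono : ∀ x ∈ M, ∀ y ∈ M, x ≠ y → f x = f y → s(x,y) ∈ F := by
      intro x hx y hy hxy hfxy
      have hnadj : ¬ H.Adj x y := by
        rw [hf x (hsupp x hx) y (hsupp y hy) hxy]
        simp [hfxy]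
      by_contra hxyF
      exact hnadj ((edit_adj_of_not_mem hxy hxyF).mpr (hclique x hx y hy hxy))
    have hrex : ∀ c : Fin ℓ, ∃ r : V, (∃ z ∈ Mf, f z = c) → (r ∈ Mf ∧ f r = c) := by
      intro c
      by_cases h : ∃ z ∈ Mf, f z = c
      · obtain ⟨z, hz, hfz⟩ := h; exact ⟨z, fun _ => ⟨hz, hfz⟩⟩
      · exact ⟨v0, fun h' => absurd h' h⟩
    choose rep hrep using hrex
    have hrepM : ∀ x ∈ Mf, rep (f x) ∈ Mf ∧ f (rep (f x)) = f x :=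
      fun x hx => hrep (f x) ⟨x, hx, rfl⟩
    have hmaps : ∀ z ∈ Mf.filter (fun x => x ≠ rep (f x)), s(z, rep (f z)) ∈ F := by
      intro z hz
      obtain ⟨hzMf, hzr⟩ := Finset.mem_filter.mp hz
      obtain ⟨hrM, hrf⟩ := hrepM z hzMf
      exact hmono z ((hmem z).mp hzMf) _ ((hmem _).mp hrM) hzr hrf.symm
    have hinj : Set.InjOn (fun z => s(z, rep (f z))) (Mf.filter (fun x => x ≠ rep (f x))) := by
      intro z hz w hw hzw
      simp only [Sym2.eq_iff] at hzw
      rcases hzw with ⟨h1, _⟩ | ⟨h1, h2⟩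
      · exact h1
      · obtain ⟨hzMf, hzr⟩ := Finset.mem_filter.mp hz
        obtain ⟨hwMf, hwr⟩ := Finset.mem_filter.mp hw
        have hfz : f z = f w := by
          have h3 := (hrepM w hwMf).2
          rw [← h1] at h3
          exact h3
        exact absurd (h1.trans (congrArg rep hfz.symm)) hzr
    have hSF : (Mf.filter (fun x => x ≠ rep (f x))).card ≤ k :=
      le_trans (Finset.card_le_card_of_injOn _ hmaps hinj) hFk
    have hSc : (Mf.filter (fun x => ¬ x ≠ rep (f x))).card ≤ ℓ := by
      have hinj2 : Set.InjOn f (Mf.filter (fun x => ¬ x ≠ rep (f x))) := by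
        intro z hz w hw hzw
        obtain ⟨hzM, hz2⟩ := Finset.mem_filter.mp hz
        obtain ⟨hwM, hw2⟩ := Finset.mem_filter.mp hw
        push_neg at hz2 hw2
        rw [hz2, hw2, hzw]
      calc (Mf.filter (fun x => ¬ x ≠ rep (f x))).card
          ≤ (Finset.univ : Finset (Fin ℓ)).card :=
            Finset.card_le_card_of_injOn f (fun _ _ => Finset.mem_univ _) hinj2
        _ = ℓ := by simp
    have hsum := Finset.card_filter_add_card_filter_not
      (s := Mf) (p := fun x => x ≠ rep (f x))
    omega
end

section
/- Let ℓ ≥ 2, let k ≥ 0 be an integer, and let G be a finite simple graph none of whose connected components is a clique or an ℓ-clique. Let M be a twin class of G of size at least 2 whose vertices are pairwise false twins (a P-vertex of G_Q), and let F be an edition set for G with |F| ≤ k such that G+F is an L-cluster graph and such that every vertex of M lies in a connected component of G+F that is a clique. Then |M| ≤ k+1. -/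
open SimpleGraph

variable {V : Type*}

/-- If `G` has no clique or `ℓ`-clique component, `M` is a P-vertex (twin class of size
≥ 2 of pairwise false twins), and an `L`-cluster-editing set `F` with `|F| ≤ k` places
every vertex of `M` into a clique component of `G + F`, then `|M| ≤ k + 1`. -/
theorem pVertex_split_into_cliques [Fintype V] (ℓ k : ℕ) (hℓ : 2 ≤ ℓ)
    (G : SimpleGraph V)
    (hG : ∀ c : G.ConnectedComponent,
      ¬ (G.IsClique c.supp ∨ IsEllCliqueOn ℓ G c.supp))
    (M : Set V) (hM : ∃ v, M = twinClass G v) (hsize : 2 ≤ M.ncard)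
    (hindep : ∀ x ∈ M, ∀ y ∈ M, x ≠ y → ¬ G.Adj x y)
    (F : Finset (Sym2 V)) (hF : IsEditionSet F) (hk : F.card ≤ k)
    (hL : IsLCluster ℓ (editGraph G F))
    (hcl : ∀ v ∈ M, (editGraph G F).IsClique
      ((editGraph G F).connectedComponentMk v).supp) :
    M.ncard ≤ k + 1 := by
  classical
  obtain ⟨v, hMv⟩ := hM
  set H := editGraph G F with hH
  have hvM : v ∈ M := by rw [hMv]; exact Or.inl rfl
  have htwin : ∀ x ∈ M, x ≠ v → IsTwinPair G v x := by
    intro x hx hxv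
    rw [hMv] at hx
    rcases hx with h | h
    · exact absurd h hxv
    · exact h
  -- every vertex outside M sees all of M or none of it
  have hAdjAll : ∀ w x y, x ∈ M → y ∈ M → w ∉ M → G.Adj w x → G.Adj w y := by
    intro w x y hx hy hw hwx
    by_cases hxy : x = y
    · exact hxy ▸ hwx
    have hwx' : w ≠ x := hwx.ne
    have hwy : w ≠ y := fun h => hw (h ▸ hy)
    have hwv : w ≠ v := fun h => hw (h ▸ hvM)
    by_cases hxv : x = v
    · subst hxv
      have ht := htwin y hy (fun h => hxy h.symm)
      exact (ht.2 w hwv hwy).mp hwx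
    · have htx := htwin x hx hxv
      have h1 : G.Adj w v := (htx.2 w hwv hwx').mpr hwx
      by_cases hyv : y = v
      · exact hyv ▸ h1
      · exact ((htwin y hy hyv).2 w hwv hwy).mp h1
  -- v has a neighbour in G
  have hnv : ∃ w, G.Adj w v := by
    by_contra h
    push_neg at h
    apply hG (G.connectedComponentMk v)
    left
    have hone : ∀ z ∈ (G.connectedComponentMk v).supp, z = v := by
      intro z hz
      rw [SimpleGraph.ConnectedComponent.mem_supp_iff,
        SimpleGraph.ConnectedComponent.eq] at hz
      obtain ⟨p⟩ := hz.symm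
      cases p with
      | nil => rfl
      | cons hadj _ => exact absurd hadj.symm (h _)
    intro a ha b hb hab
    exact absurd ((hone a ha).trans (hone b hb).symm) hab
  obtain ⟨w, hwv⟩ := hnv
  have hwM : w ∉ M := by
    intro hw
    exact hindep w hw v hvM hwv.ne hwv
  have hwAdj : ∀ x ∈ M, G.Adj w x := fun x hx => hAdjAll w v x hvM hx hwM hwv
  -- adjacency in the edited graph
  have hHadj : ∀ x y : V,
      H.Adj x y ↔ s(x,y) ∈ symmDiff G.edgeSet (F : Set (Sym2 V)) ∧ x ≠ y := by
    intro x y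
    rw [hH, editGraph, SimpleGraph.fromEdgeSet_adj]
  have hF1 : ∀ x y : V, x ≠ y → ¬ G.Adj x y → H.Adj x y → s(x,y) ∈ F := by
    intro x y hxy hg hh
    have := ((hHadj x y).mp hh).1
    rw [Set.mem_symmDiff] at this
    rcases this with ⟨h1, _⟩ | ⟨h1, _⟩
    · exact absurd ((SimpleGraph.mem_edgeSet G).mp h1) hg
    · exact h1
  have hF2 : ∀ x y : V, G.Adj x y → ¬ H.Adj x y → s(x,y) ∈ F := by
    intro x y hg hh
    by_contra hf
    apply hh
    rw [hHadj]
    refine ⟨?_, hg.ne⟩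
    rw [Set.mem_symmDiff]
    exact Or.inl ⟨(SimpleGraph.mem_edgeSet G).mpr hg, hf⟩
  set c0 := H.connectedComponentMk w with hc0
  -- in-A edges and out-of-A edges are in F
  have hInA : ∀ x ∈ M, ∀ y ∈ M, x ≠ y → H.connectedComponentMk x = c0 →
      H.connectedComponentMk y = c0 → s(x,y) ∈ F := by
    intro x hx y hy hxy hxc hyc
    apply hF1 x y hxy (hindep x hx y hy hxy)
    have hcliq := hcl x hx
    apply hcliq _ _ hxy
    · exact (SimpleGraph.ConnectedComponent.mem_supp_iff _ _).mpr rfl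
    · exact (SimpleGraph.ConnectedComponent.mem_supp_iff _ _).mpr (hyc.trans hxc.symm)
  have hOutA : ∀ x ∈ M, H.connectedComponentMk x ≠ c0 → s(x,w) ∈ F := by
    intro x hx hxc
    apply hF2 x w (hwAdj x hx).symm
    intro hadj
    exact hxc (SimpleGraph.ConnectedComponent.sound hadj.reachable)
  -- counting principle
  have hcount : ∀ x0 ∈ M, ∀ f : V → Sym2 V, Set.InjOn f (M \ {x0}) →
      (∀ x ∈ M \ {x0}, f x ∈ F) → M.ncard ≤ k + 1 := by
    intro x0 hx0 f hinj hmem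
    have h1 : (M \ {x0}).ncard ≤ F.card := by
      have himg : f '' (M \ {x0}) ⊆ (F : Set (Sym2 V)) := by
        rintro _ ⟨x, hx, rfl⟩
        exact hmem x hx
      calc (M \ {x0}).ncard = (f '' (M \ {x0})).ncard :=
            (Set.ncard_image_of_injOn hinj).symm
        _ ≤ (F : Set (Sym2 V)).ncard := Set.ncard_le_ncard himg (Set.toFinite _)
        _ = F.card := by simp [Set.ncard_coe_finset]
    have h2 : (M \ {x0}).ncard = M.ncard - 1 :=
      Set.ncard_diff_singleton_of_mem hx0
    omega
  by_cases hA : ∃ x ∈ M, H.connectedComponentMk x = c0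
  · obtain ⟨x0, hx0M, hx0c⟩ := hA
    apply hcount x0 hx0M
      (fun x => if H.connectedComponentMk x = c0 then s(x, x0) else s(x, w))
    · intro x hx y hy heq
      have hxM := hx.1; have hyM := hy.1
      have hxw : x ≠ w := fun h => hwM (h ▸ hxM)
      have hyw : y ≠ w := fun h => hwM (h ▸ hyM)
      have hx0w : x0 ≠ w := fun h => hwM (h ▸ hx0M)
      by_cases h1 : H.connectedComponentMk x = c0 <;>
        by_cases h2 : H.connectedComponentMk y = c0 <;>
        simp only [h1, h2, if_pos, if_neg, if_true, if_false, Sym2.eq_iff] at heq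
      · rcases heq with ⟨h, _⟩ | ⟨h, h'⟩
        · exact h
        · exact absurd h (by simpa using hx.2)
      · rcases heq with ⟨h, h'⟩ | ⟨h, h'⟩
        · exact absurd h' hx0w
        · exact absurd h hxw
      · rcases heq with ⟨h, h'⟩ | ⟨h, h'⟩
        · exact h
        · exact absurd h (by simpa using hx.2)
      · rcases heq with ⟨h, _⟩ | ⟨h, h'⟩
        · exact h
        · exact absurd h hxw
    · intro x hx
      by_cases h1 : H.connectedComponentMk x = c0
      · rw [if_pos h1]
        exact hInA x hx.1 x0 hx0M (by simpa using hx.2) h1 hx0c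
      · rw [if_neg h1]
        exact hOutA x hx.1 h1
  · push_neg at hA
    apply hcount v hvM (fun x => s(x, w))
    · intro x hx y hy heq
      have hxw : x ≠ w := fun h => hwM (h ▸ hx.1)
      rw [Sym2.eq_iff] at heq
      rcases heq with ⟨h, _⟩ | ⟨h, h'⟩
      · exact h
      · exact absurd h hxw
    · intro x hx
      exact hOutA x hx.1 (hA x hx.1)
end

section
/- Let ℓ ≥ 2, let k ≥ 0 be an integer, and let G be a finite simple graph none of whose connected components is a clique or an ℓ-clique. Let M be a twin class of G of size at least 2 whose vertices are pairwise false twins (a P-vertex of G_Q), and let F be an edition set of minimum size among all edition sets F' for which G+F' is an L-cluster graph, with |F| ≤ k. Suppose that in G+F the vertices of M are distributed among exactly one connected component that is an ℓ-clique but not a clique and one or more connected components that are cliques of size at least two. Then |M| ≤ k. -/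
open SimpleGraph

variable {V : Type*}

lemma editGraph_adj (G : SimpleGraph V) (F : Finset (Sym2 V)) (x y : V) :
    (editGraph G F).Adj x y ↔
      x ≠ y ∧ ((G.Adj x y ∧ s(x,y) ∉ F) ∨ (s(x,y) ∈ F ∧ ¬ G.Adj x y)) := by
  simp only [editGraph, fromEdgeSet_adj, Set.mem_symmDiff, Finset.mem_coe, mem_edgeSet]
  tauto

lemma mem_of_reach {H : SimpleGraph V} {S : Set V}
    (hclosed : ∀ a b, a ∈ S → H.Adj a b → b ∈ S) {u x : V}
    (hu : u ∈ S) (h : H.Reachable u x) : x ∈ S := by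
  obtain ⟨p⟩ := h
  induction p with
  | nil => exact hu
  | cons hadj p ih => exact ih (hclosed _ _ hu hadj)

lemma reach_transfer {H H' : SimpleGraph V} {S : Set V}
    (hclosed : ∀ a b, a ∈ S → H.Adj a b → b ∈ S)
    (hagree : ∀ a b, a ∈ S → H.Adj a b → H'.Adj a b) {u v : V}
    (hu : u ∈ S) (h : H.Reachable u v) : H'.Reachable u v := by
  obtain ⟨p⟩ := h
  induction p with
  | nil => exact Reachable.refl _
  | cons hadj p ih =>
      exact Reachable.trans (Adj.reachable (hagree _ _ hu hadj))
        (ih (hclosed _ _ hu hadj))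

lemma supp_eq {H' : SimpleGraph V} {v : V} {S : Set V} (hv : v ∈ S)
    (hconn : ∀ a ∈ S, H'.Reachable v a)
    (hclosed : ∀ a b, a ∈ S → H'.Adj a b → b ∈ S) :
    (H'.connectedComponentMk v).supp = S := by
  ext x
  simp only [ConnectedComponent.mem_supp_iff, ConnectedComponent.eq]
  constructor
  · intro h
    exact mem_of_reach hclosed hv h.symm
  · intro h
    exact (hconn x h).symm

lemma induce_supp_connected' (H : SimpleGraph V) (c : H.ConnectedComponent) :
    (H.induce c.supp).Connected := by
  obtain ⟨v, hv⟩ := c.exists_rep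
  have key : ∀ (u x : V) (p : H.Walk u x) (hu : u ∈ c.supp) (hx : x ∈ c.supp),
      (H.induce c.supp).Reachable ⟨u, hu⟩ ⟨x, hx⟩ := by
    intro u x p
    induction p with
    | nil => intro hu hx; rfl
    | @cons a b w hadj p ih =>
        intro hu hx
        have hb : b ∈ c.supp := by
          rw [ConnectedComponent.mem_supp_iff] at hu ⊢
          rw [← hu]
          exact (ConnectedComponent.connectedComponentMk_eq_of_adj hadj).symm
        exact Reachable.trans (Adj.reachable (by exact hadj : (H.induce c.supp).Adj ⟨a, hu⟩ ⟨b, hb⟩)) (ih hb hx)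
  rw [connected_iff]
  refine ⟨?_, ⟨⟨v, hv⟩⟩⟩
  rintro ⟨a, ha⟩ ⟨b, hb⟩
  have h1 : H.Reachable a b := by
    rw [ConnectedComponent.mem_supp_iff] at ha hb
    rw [← ConnectedComponent.eq, ha, hb]
  obtain ⟨p⟩ := h1
  exact key a b p ha hb

lemma exists_nbr_of_mem_supp {H : SimpleGraph V} {c : H.ConnectedComponent}
    {x y : V} (hx : x ∈ c.supp) (hy : y ∈ c.supp) (hxy : x ≠ y) :
    ∃ z, z ∈ c.supp ∧ H.Adj x z := by
  have h1 : H.Reachable x y := by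
    rw [ConnectedComponent.mem_supp_iff] at hx hy
    rw [← ConnectedComponent.eq, hx, hy]
  obtain ⟨p⟩ := h1
  cases p with
  | nil => exact absurd rfl hxy
  | @cons a b w hadj p =>
      refine ⟨b, ?_, hadj⟩
      rw [ConnectedComponent.mem_supp_iff] at hx ⊢
      rw [← hx]
      exact (ConnectedComponent.connectedComponentMk_eq_of_adj hadj).symm

lemma transfer_supp {H H' : SimpleGraph V} (c : H.ConnectedComponent)
    (hagree : ∀ a ∈ c.supp, ∀ b, H.Adj a b ↔ H'.Adj a b) {x : V} (hx : x ∈ c.supp) :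
    (H'.connectedComponentMk x).supp = c.supp := by
  apply supp_eq hx
  · intro a ha
    refine reach_transfer (fun p q hp hpq => ?_) (fun p q hp hpq => (hagree p hp q).mp hpq) hx ?_
    · rw [ConnectedComponent.mem_supp_iff] at hp ⊢
      rw [← hp]; exact (ConnectedComponent.connectedComponentMk_eq_of_adj hpq).symm
    · rw [ConnectedComponent.mem_supp_iff] at ha hx
      rw [← ConnectedComponent.eq, hx, ha]
  · intro a b ha hab
    have : H.Adj a b := (hagree a ha b).mpr hab
    rw [ConnectedComponent.mem_supp_iff] at ha ⊢
    rw [← ha]; exact (ConnectedComponent.connectedComponentMk_eq_of_adj this).symm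

lemma lcluster_piece {ℓ : ℕ} {H H' : SimpleGraph V} (c : H.ConnectedComponent)
    (hagree : ∀ a ∈ c.supp, ∀ b, H.Adj a b ↔ H'.Adj a b)
    (hc : H.IsClique c.supp ∨ IsEllCliqueOn ℓ H c.supp) {x : V} (hx : x ∈ c.supp) :
    H'.IsClique (H'.connectedComponentMk x).supp ∨
      IsEllCliqueOn ℓ H' (H'.connectedComponentMk x).supp := by
  have hs := transfer_supp c hagree hx
  rw [hs]
  rcases hc with hcl | ⟨hconn, f, hf⟩
  · left
    intro a ha b hb hne
    exact (hagree a ha b).mp (hcl ha hb hne)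
  · right
    constructor
    · rw [← hs]; exact induce_supp_connected' H' _
    · refine ⟨f, fun p hp q hq hne => ?_⟩
      rw [← hagree p hp q]
      exact hf p hp q hq hne

lemma mem_supp_of_adj {H : SimpleGraph V} {c : H.ConnectedComponent} {a b : V}
    (ha : a ∈ c.supp) (h : H.Adj a b) : b ∈ c.supp := by
  rw [ConnectedComponent.mem_supp_iff] at ha ⊢
  rw [← ha]
  exact (ConnectedComponent.connectedComponentMk_eq_of_adj h).symm

lemma reach_of_mem_supp {H : SimpleGraph V} {c : H.ConnectedComponent} {a b : V}
    (ha : a ∈ c.supp) (hb : b ∈ c.supp) : H.Reachable a b := by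
  rw [ConnectedComponent.mem_supp_iff] at ha hb
  rw [← ConnectedComponent.eq, ha, hb]

lemma self_mem_supp {H : SimpleGraph V} (v : V) : v ∈ (H.connectedComponentMk v).supp :=
  ConnectedComponent.connectedComponentMk_mem

lemma comp_eq_of_mem_supp {H : SimpleGraph V} {c : H.ConnectedComponent} {a : V}
    (ha : a ∈ c.supp) : H.connectedComponentMk a = c := ha

lemma exchange1 {ℓ : ℕ} {H H' : SimpleGraph V} {mstar mtwo : V}
    (hL : ∀ c : H.ConnectedComponent, H.IsClique c.supp ∨ IsEllCliqueOn ℓ H c.supp)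
    (ha : ∀ x y, mtwo ≠ x → mtwo ≠ y → (H'.Adj x y ↔ H.Adj x y))
    (hb : ∀ b, H'.Adj mtwo b ↔ H.Adj mstar b)
    (hne2 : H.connectedComponentMk mtwo ≠ H.connectedComponentMk mstar)
    (hEll : IsEllCliqueOn ℓ H (H.connectedComponentMk mstar).supp)
    (hclique₂ : H.IsClique (H.connectedComponentMk mtwo).supp)
    (hz : ∃ z, H.Adj mstar z) :
    ∀ c : H'.ConnectedComponent, H'.IsClique c.supp ∨ IsEllCliqueOn ℓ H' c.supp := by
  obtain ⟨z, hz⟩ := hz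
  have hzsupp : z ∈ (H.connectedComponentMk mstar).supp :=
    mem_supp_of_adj (self_mem_supp mstar) hz
  have hnotc₀ : ∀ w, w ∈ (H.connectedComponentMk mstar).supp → mtwo ≠ w := by
    intro w hw he
    exact hne2 (by rw [he]; exact comp_eq_of_mem_supp hw)
  have hm2nstar : mtwo ≠ mstar := hnotc₀ _ (self_mem_supp mstar)
  have hm2nz : mtwo ≠ z := hnotc₀ _ hzsupp
  have hsupp₁ : (H'.connectedComponentMk mstar).supp
      = (H.connectedComponentMk mstar).supp ∪ {mtwo} := by
    apply supp_eq (Set.mem_union_left _ (self_mem_supp mstar))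
    · rintro a (hain | ha2)
      swap
      · simp only [Set.mem_singleton_iff] at ha2
        rw [ha2]
        have h1 : H'.Adj mstar z := (ha mstar z hm2nstar hm2nz).mpr hz
        have h2 : H'.Adj mtwo z := (hb z).mpr hz
        exact Reachable.trans h1.reachable h2.reachable.symm
      · refine reach_transfer (fun p q hp hpq => mem_supp_of_adj hp hpq)
          (fun p q hp hpq => (ha p q (hnotc₀ p hp) (hnotc₀ q (mem_supp_of_adj hp hpq))).mpr hpq)
          (self_mem_supp mstar) (reach_of_mem_supp (self_mem_supp mstar) hain)
    · rintro a b (hain | ha2) hadj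
      · by_cases hbm : b = mtwo
        · exact Or.inr (by rw [hbm]; rfl)
        · exact Or.inl (mem_supp_of_adj hain
            ((ha a b (hnotc₀ a hain) (Ne.symm hbm)).mp hadj))
      · simp only [Set.mem_singleton_iff] at ha2
        rw [ha2] at hadj
        exact Or.inl (mem_supp_of_adj (self_mem_supp mstar) ((hb b).mp hadj))
  intro c
  induction c using SimpleGraph.ConnectedComponent.ind with
  | _ x =>
  by_cases hx1 : x ∈ (H.connectedComponentMk mstar).supp ∪ {mtwo}
  · have hcomp : H'.connectedComponentMk x = H'.connectedComponentMk mstar :=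
      comp_eq_of_mem_supp (by rw [hsupp₁]; exact hx1)
    rw [hcomp, hsupp₁]
    right
    obtain ⟨hconn, f, hf⟩ := hEll
    constructor
    · rw [← hsupp₁]; exact induce_supp_connected' H' _
    · classical
      refine ⟨fun w => if w = mtwo then f mstar else f w, ?_⟩
      rintro p (hp | hp2) q (hq | hq2) hne <;> dsimp only <;>
        (try simp only [Set.mem_singleton_iff] at *)
      · rw [if_neg (fun h => hnotc₀ p hp h.symm), if_neg (fun h => hnotc₀ q hq h.symm)]
        rw [ha p q (hnotc₀ p hp) (hnotc₀ q hq)]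
        exact hf p hp q hq hne
      · rw [hq2, if_neg (fun h => hnotc₀ p hp h.symm), if_pos rfl]
        have h2 : H'.Adj p mtwo ↔ H.Adj mstar p := by rw [adj_comm]; exact hb p
        rw [h2]
        by_cases hpm : p = mstar
        · rw [hpm]
          simp only [H.irrefl, false_iff, ne_eq, not_not]
        · rw [adj_comm]
          exact hf p hp mstar (self_mem_supp mstar) hpm
      · rw [hp2, if_pos rfl, if_neg (fun h => hnotc₀ q hq h.symm)]
        rw [hb q]
        by_cases hqm : q = mstar
        · rw [hqm]
          simp only [H.irrefl, false_iff, ne_eq, not_not]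
        · exact hf mstar (self_mem_supp mstar) q hq (Ne.symm hqm)
      · exact absurd (hp2.trans hq2.symm) hne
  · have hxnot : x ∉ (H.connectedComponentMk mstar).supp := fun h => hx1 (Or.inl h)
    have hxnm2 : x ≠ mtwo := fun h => hx1 (Or.inr (by rw [h]; rfl))
    by_cases hx2 : H.connectedComponentMk x = H.connectedComponentMk mtwo
    · have hsupp₂ : (H'.connectedComponentMk x).supp
          = (H.connectedComponentMk mtwo).supp \ {mtwo} := by
        apply supp_eq
        · exact ⟨by rw [ConnectedComponent.mem_supp_iff]; exact hx2, by simpa using hxnm2⟩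
        · rintro a ⟨hain, hanm2⟩
          simp only [Set.mem_singleton_iff] at hanm2
          by_cases hax : a = x
          · rw [hax]
          · have hHadj : H.Adj x a := by
              apply hclique₂ _ hain (Ne.symm hax)
              rw [ConnectedComponent.mem_supp_iff]; exact hx2
            exact ((ha x a (Ne.symm hxnm2) (Ne.symm hanm2)).mpr hHadj).reachable
        · rintro a b ⟨hain, hanm2⟩ hadj
          simp only [Set.mem_singleton_iff] at hanm2
          by_cases hbm : b = mtwo
          · exfalso
            subst hbm
            have h3 : H.Adj mstar a := (hb a).mp hadj.symm
            have h4 : a ∈ (H.connectedComponentMk mstar).supp :=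
              mem_supp_of_adj (self_mem_supp mstar) h3
            exact hne2 (by rw [← comp_eq_of_mem_supp hain, comp_eq_of_mem_supp h4])
          · refine ⟨mem_supp_of_adj hain ((ha a b (Ne.symm hanm2) (Ne.symm hbm)).mp hadj),
              by simpa using hbm⟩
      rw [hsupp₂]
      left
      rintro p ⟨hp, hpn⟩ q ⟨hq, hqn⟩ hne
      simp only [Set.mem_singleton_iff] at hpn hqn
      exact (ha p q (Ne.symm hpn) (Ne.symm hqn)).mpr (hclique₂ hp hq hne)
    · have hagree : ∀ a ∈ (H.connectedComponentMk x).supp, ∀ b, H.Adj a b ↔ H'.Adj a b := by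
        intro a hain b
        have hanm2 : a ≠ mtwo := by
          intro h
          exact hx2 ((comp_eq_of_mem_supp (h ▸ hain)).symm)
        by_cases hbm : b = mtwo
        · subst hbm
          constructor
          · intro h
            exact absurd ((comp_eq_of_mem_supp hain).symm.trans
              (ConnectedComponent.connectedComponentMk_eq_of_adj h)) hx2
          · intro h
            have h3 : H.Adj mstar a := (hb a).mp h.symm
            exact absurd ((comp_eq_of_mem_supp hain).symm.trans
              (ConnectedComponent.connectedComponentMk_eq_of_adj h3).symm) hxnot
        · rw [ha a b (Ne.symm hanm2) (Ne.symm hbm)]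
      exact lcluster_piece (H.connectedComponentMk x) hagree (hL _) (self_mem_supp x)

lemma exchange3 {ℓ : ℕ} {H H' : SimpleGraph V} {A N : Set V} {d y₀ : V}
    (hL : ∀ c : H.ConnectedComponent, H.IsClique c.supp ∨ IsEllCliqueOn ℓ H c.supp)
    (ha : ∀ x y, x ∉ A → y ∉ A → (H'.Adj x y ↔ H.Adj x y))
    (hb : ∀ a ∈ A, ∀ b, H'.Adj a b ↔ b ∈ N)
    (hdA : d ∈ A) (hy₀ : y₀ ∈ N)
    (hAN : ∀ x, x ∈ A → x ∉ N)
    (hsupp : (H.connectedComponentMk d).supp = A ∪ N)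
    (hdN : ∀ y ∈ N, H.Adj d y)
    (hcolor : ∃ f : V → Fin ℓ, ∀ x ∈ A ∪ N, ∀ y ∈ A ∪ N, x ≠ y → (H.Adj x y ↔ f x ≠ f y)) :
    ∀ c : H'.ConnectedComponent, H'.IsClique c.supp ∨ IsEllCliqueOn ℓ H' c.supp := by
  classical
  have hsupp' : (H'.connectedComponentMk d).supp = A ∪ N := by
    apply supp_eq (Set.mem_union_left _ hdA)
    · rintro a (haA | haN)
      · exact Reachable.trans ((hb d hdA y₀).mpr hy₀).reachable
          (((hb a haA y₀).mpr hy₀).reachable).symm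
      · exact ((hb d hdA a).mpr haN).reachable
    · rintro a b (haA | haN) hadj
      · exact Or.inr ((hb a haA b).mp hadj)
      · by_cases hbA : b ∈ A
        · exact Or.inl hbA
        · have hH : H.Adj a b := (ha a b (fun hc => hAN a hc haN) hbA).mp hadj
          have : b ∈ (H.connectedComponentMk d).supp :=
            mem_supp_of_adj (by rw [hsupp]; exact Or.inr haN) hH
          rw [hsupp] at this
          exact this
  intro c
  induction c using SimpleGraph.ConnectedComponent.ind with
  | _ x =>
  by_cases hx1 : x ∈ A ∪ N
  · have hcomp : H'.connectedComponentMk x = H'.connectedComponentMk d :=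
      comp_eq_of_mem_supp (by rw [hsupp']; exact hx1)
    rw [hcomp, hsupp']
    right
    obtain ⟨f, hf⟩ := hcolor
    have hNd : ∀ y ∈ N, f y ≠ f d := by
      intro y hy
      have : H.Adj d y := hdN y hy
      have hdy : d ≠ y := fun h => hAN d hdA (h ▸ hy)
      exact fun h => ((hf d (Or.inl hdA) y (Or.inr hy) hdy).mp this) h.symm
    constructor
    · rw [← hsupp']; exact induce_supp_connected' H' _
    · refine ⟨fun w => if w ∈ A then f d else f w, ?_⟩
      rintro p (hp | hp) q (hq | hq) hne <;> dsimp only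
      · rw [if_pos hp, if_pos hq]
        simp only [ne_eq, not_true_eq_false, iff_false]
        rw [hb p hp q]
        exact hAN q hq
      · rw [if_pos hp, if_neg (fun h => hAN q h hq)]
        rw [hb p hp q]
        simp only [hq, true_iff]
        exact (hNd q hq).symm
      · rw [if_neg (fun h => hAN p h hp), if_pos hq]
        have : H'.Adj p q ↔ H'.Adj q p := adj_comm _ _ _
        rw [this, hb q hq p]
        simp only [hp, true_iff]
        exact hNd p hp
      · rw [if_neg (fun h => hAN p h hp), if_neg (fun h => hAN q h hq)]
        rw [ha p q (fun h => hAN p h hp) (fun h => hAN q h hq)]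
        exact hf p (Or.inr hp) q (Or.inr hq) hne
  · have hxnot : x ∉ (H.connectedComponentMk d).supp := by rw [hsupp]; exact hx1
    have hxA : x ∉ A := fun h => hx1 (Or.inl h)
    have hagree : ∀ a ∈ (H.connectedComponentMk x).supp, ∀ b, H.Adj a b ↔ H'.Adj a b := by
      intro a hain b
      have hcompax : H.connectedComponentMk a = H.connectedComponentMk x := hain
      have hanotd : H.connectedComponentMk a ≠ H.connectedComponentMk d := by
        intro h
        exact hxnot (by rw [ConnectedComponent.mem_supp_iff, ← hcompax, h])
      have haA : a ∉ A := by
        intro h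
        exact hanotd (comp_eq_of_mem_supp (by rw [hsupp]; exact Or.inl h))
      have haN : a ∉ N := by
        intro h
        exact hanotd (comp_eq_of_mem_supp (by rw [hsupp]; exact Or.inr h))
      by_cases hbA : b ∈ A
      · constructor
        · intro h
          exfalso
          apply hanotd
          have : b ∈ (H.connectedComponentMk d).supp := by rw [hsupp]; exact Or.inl hbA
          rw [← comp_eq_of_mem_supp this]
          exact ConnectedComponent.connectedComponentMk_eq_of_adj h
        · intro h
          exfalso
          have : a ∈ N := by
            have h2 : H'.Adj b a := h.symm
            exact (hb b hbA a).mp h2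
          exact haN this
      · rw [ha a b haA hbA]
    exact lcluster_piece (H.connectedComponentMk x) hagree (hL _) (self_mem_supp x)

lemma exchange2 {ℓ : ℕ} {H H' : SimpleGraph V} {d d' y₀ : V} (hℓ : 2 ≤ ℓ)
    (hL : ∀ c : H.ConnectedComponent, H.IsClique c.supp ∨ IsEllCliqueOn ℓ H c.supp)
    (ha : ∀ x y, ¬(x = d ∧ y = d') → ¬(x = d' ∧ y = d) → (H'.Adj x y ↔ H.Adj x y))
    (hb : ¬ H'.Adj d d')
    (hdd : d ≠ d') (hdy : d ≠ y₀) (hd'y : d' ≠ y₀)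
    (hsupp : (H.connectedComponentMk d).supp = {d, d', y₀})
    (hclique : H.IsClique (H.connectedComponentMk d).supp) :
    ∀ c : H'.ConnectedComponent, H'.IsClique c.supp ∨ IsEllCliqueOn ℓ H' c.supp := by
  classical
  have hdS : d ∈ ({d, d', y₀} : Set V) := by simp
  have hd'S : d' ∈ ({d, d', y₀} : Set V) := by simp
  have hyS : y₀ ∈ ({d, d', y₀} : Set V) := by simp
  have hdS' : d ∈ (H.connectedComponentMk d).supp := self_mem_supp d
  have hd'S' : d' ∈ (H.connectedComponentMk d).supp := by rw [hsupp]; exact hd'S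
  have hyS' : y₀ ∈ (H.connectedComponentMk d).supp := by rw [hsupp]; exact hyS
  have hady : H.Adj d y₀ := hclique hdS' hyS' hdy
  have had'y : H.Adj d' y₀ := hclique hd'S' hyS' hd'y
  have h'dy : H'.Adj d y₀ := (ha d y₀ (fun h => hd'y h.2.symm) (fun h => hdd h.1)).mpr hady
  have h'd'y : H'.Adj d' y₀ := (ha d' y₀ (fun h => hdd h.1.symm) (fun h => hdy h.2.symm)).mpr had'y
  have hsupp' : (H'.connectedComponentMk d).supp = {d, d', y₀} := by
    apply supp_eq hdS
    · rintro a (rfl | rfl | rfl)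
      · rfl
      · exact Reachable.trans h'dy.reachable h'd'y.reachable.symm
      · exact h'dy.reachable
    · intro a b haS hadj
      have hH : H.Adj a b := by
        by_cases h1 : a = d ∧ b = d'
        · exact absurd (h1.1 ▸ h1.2 ▸ hadj) hb
        · by_cases h2 : a = d' ∧ b = d
          · exact absurd (h2.1 ▸ h2.2 ▸ hadj) (fun h => hb h.symm)
          · exact (ha a b h1 h2).mp hadj
      have : b ∈ (H.connectedComponentMk d).supp :=
        mem_supp_of_adj (by rw [hsupp]; exact haS) hH
      rw [hsupp] at this
      exact this
  intro c
  induction c using SimpleGraph.ConnectedComponent.ind with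
  | _ x =>
  by_cases hx1 : x ∈ ({d, d', y₀} : Set V)
  · have hcomp : H'.connectedComponentMk x = H'.connectedComponentMk d :=
      comp_eq_of_mem_supp (by rw [hsupp']; exact hx1)
    rw [hcomp, hsupp']
    right
    constructor
    · rw [← hsupp']; exact induce_supp_connected' H' _
    · refine ⟨fun w => if w = y₀ then (⟨1, lt_of_lt_of_le one_lt_two hℓ⟩ : Fin ℓ)
        else ⟨0, lt_of_lt_of_le two_pos hℓ⟩, ?_⟩
      have h01 : (⟨0, lt_of_lt_of_le two_pos hℓ⟩ : Fin ℓ) ≠ ⟨1, lt_of_lt_of_le one_lt_two hℓ⟩ := by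
        simp [Fin.ext_iff]
      rintro p (rfl | rfl | rfl) q (rfl | rfl | rfl) hne <;> dsimp only <;>
        first
        | exact absurd rfl hne
        | (rw [if_neg hdy, if_neg hd'y]
           simp only [ne_eq, not_true_eq_false, iff_false]
           exact hb)
        | (rw [if_neg hd'y, if_neg hdy]
           simp only [ne_eq, not_true_eq_false, iff_false]
           exact fun h => hb h.symm)
        | (rw [if_neg hdy, if_pos rfl]
           simp only [h01, ne_eq, not_false_eq_true, iff_true]
           exact h'dy)
        | (rw [if_neg hd'y, if_pos rfl]
           simp only [h01, ne_eq, not_false_eq_true, iff_true]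
           exact h'd'y)
        | (rw [if_pos rfl, if_neg hdy]
           simp only [h01.symm, ne_eq, not_false_eq_true, iff_true]
           exact h'dy.symm)
        | (rw [if_pos rfl, if_neg hd'y]
           simp only [h01.symm, ne_eq, not_false_eq_true, iff_true]
           exact h'd'y.symm)
  · have hxnot : x ∉ (H.connectedComponentMk d).supp := by rw [hsupp]; exact hx1
    have hagree : ∀ a ∈ (H.connectedComponentMk x).supp, ∀ b, H.Adj a b ↔ H'.Adj a b := by
      intro a hain b
      have hanotd : H.connectedComponentMk a ≠ H.connectedComponentMk d := by
        intro h
        exact hxnot (by rw [ConnectedComponent.mem_supp_iff, ← comp_eq_of_mem_supp hain, h])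
      have had : a ≠ d := fun h => hanotd (by rw [h])
      have had' : a ≠ d' := by
        intro h
        apply hanotd
        rw [h]
        exact comp_eq_of_mem_supp hd'S'
      rw [ha a b (fun h => had h.1) (fun h => had' h.1)]
    exact lcluster_piece (H.connectedComponentMk x) hagree (hL _) (self_mem_supp x)

/-- If `G` has no clique or `ℓ`-clique component, `M` is a P-vertex, and a minimum
`L`-cluster-editing set `F` with `|F| ≤ k` distributes the vertices of `M` among exactly
one `ℓ`-clique component (that is not a clique) and one or more clique components of
size at least two, then `|M| ≤ k`. -/
theorem pVertex_split_ellClique_and_cliques [Fintype V] (ℓ k : ℕ) (hℓ : 2 ≤ ℓ)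
    (G : SimpleGraph V)
    (hG : ∀ c : G.ConnectedComponent,
      ¬ (G.IsClique c.supp ∨ IsEllCliqueOn ℓ G c.supp))
    (M : Set V) (hM : ∃ v, M = twinClass G v) (hsize : 2 ≤ M.ncard)
    (hindep : ∀ x ∈ M, ∀ y ∈ M, x ≠ y → ¬ G.Adj x y)
    (F : Finset (Sym2 V)) (hF : IsEditionSet F) (hk : F.card ≤ k)
    (hL : IsLCluster ℓ (editGraph G F))
    (hmin : ∀ F' : Finset (Sym2 V), IsEditionSet F' →
      IsLCluster ℓ (editGraph G F') → F.card ≤ F'.card)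
    (hsplit : ∃ c₀ : (editGraph G F).ConnectedComponent,
      (M ∩ c₀.supp).Nonempty ∧
      IsEllCliqueOn ℓ (editGraph G F) c₀.supp ∧
      ¬ (editGraph G F).IsClique c₀.supp ∧
      (∀ c : (editGraph G F).ConnectedComponent, (M ∩ c.supp).Nonempty → c ≠ c₀ →
        (editGraph G F).IsClique c.supp ∧ 2 ≤ c.supp.ncard) ∧
      (∃ c : (editGraph G F).ConnectedComponent, c ≠ c₀ ∧ (M ∩ c.supp).Nonempty)) :
    M.ncard ≤ k := by
  classical
  set H := editGraph G F with hHdef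
  obtain ⟨v, hMv⟩ := hM
  have hvM : v ∈ M := by rw [hMv]; exact Or.inl rfl
  -- all vertices of M have the same G-neighbourhood
  have hGadj : ∀ m ∈ M, ∀ w, G.Adj m w ↔ G.Adj v w := by
    intro m hm w
    by_cases hmv : m = v
    · rw [hmv]
    · have htw : IsTwinPair G v m := by
        have h2 : m ∈ twinClass G v := hMv ▸ hm
        rcases h2 with h | h
        · exact absurd h hmv
        · exact h
      by_cases hwv : w = v
      · rw [hwv]
        constructor
        · intro h; exact absurd h (hindep m hm v hvM hmv)
        · intro h; exact absurd h (G.loopless.irrefl v)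

      · by_cases hwm : w = m
        · rw [hwm]
          constructor
          · intro h; exact absurd h (G.loopless.irrefl m)
          · intro h; exact absurd h (hindep v hvM m hm (Ne.symm hmv))
        · have h3 := htw.2 w hwv hwm
          exact ⟨fun h => ((h3).mpr h.symm).symm, fun h => ((h3).mp h.symm).symm⟩
  -- common neighbourhood facts
  have hNmem : ∀ w, G.Adj v w → w ∉ M := by
    intro w hw hwM
    by_cases h : w = v
    · exact G.loopless.irrefl v (h ▸ hw)
    · exact hindep v hvM w hwM (Ne.symm h) hw
  have hNne : ∃ y, G.Adj v y := by
    by_contra hno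
    push_neg at hno
    apply hG (G.connectedComponentMk v)
    left
    have hsub : (G.connectedComponentMk v).supp = {v} := by
      apply supp_eq (S := {v}) rfl
      · intro a ha
        rw [Set.mem_singleton_iff] at ha
        rw [ha]
      · intro a b ha hab
        rw [Set.mem_singleton_iff] at ha
        exact absurd (ha ▸ hab) (hno b)
    rw [hsub]
    intro a ha b hb hab
    rw [Set.mem_singleton_iff] at ha hb
    exact absurd (ha.trans hb.symm) hab
  have hH : ∀ x y, H.Adj x y ↔
      x ≠ y ∧ ((G.Adj x y ∧ s(x,y) ∉ F) ∨ (s(x,y) ∈ F ∧ ¬ G.Adj x y)) :=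
    editGraph_adj G F
  have hFnd : ∀ x y : V, s(x,y) ∈ F → x ≠ y := by
    intro x y hxy h
    exact hF _ hxy (by rw [h]; exact Sym2.mk_isDiag_iff.mpr rfl)
  have hMM : ∀ x ∈ M, ∀ y ∈ M, x ≠ y → (s(x,y) ∈ F ↔ H.Adj x y) := by
    intro x hx y hy hxy
    rw [hH]
    constructor
    · intro h; exact ⟨hxy, Or.inr ⟨h, hindep x hx y hy hxy⟩⟩
    · rintro ⟨-, (⟨hadj, -⟩ | ⟨hmem, -⟩)⟩
      · exact absurd hadj (hindep x hx y hy hxy)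
      · exact hmem
  have hMNadj : ∀ m ∈ M, ∀ w, G.Adj v w → ¬ H.Adj m w → s(m, w) ∈ F := by
    intro m hm w hw hnadj
    by_contra hns
    apply hnadj
    rw [hH]
    exact ⟨fun h => hNmem w hw (h ▸ hm), Or.inl ⟨(hGadj m hm w).mpr hw, hns⟩⟩
  have hdiffcomp : ∀ x y : V, H.connectedComponentMk x ≠ H.connectedComponentMk y →
      ¬ H.Adj x y := by
    intro x y h hadj
    exact h (ConnectedComponent.connectedComponentMk_eq_of_adj hadj)
  have hcross : ∀ m ∈ M, ∀ w, G.Adj v w →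
      H.connectedComponentMk m ≠ H.connectedComponentMk w → s(m,w) ∈ F :=
    fun m hm w hw hne => hMNadj m hm w hw (hdiffcomp _ _ hne)
  obtain ⟨c₀, ⟨m₁, hm₁M, hm₁c⟩, hEll₀, hNC₀, hOther, cB, hcBne, m₂, hm₂M, hm₂c⟩ := hsplit
  have hc₀two : ∃ u w, u ∈ c₀.supp ∧ w ∈ c₀.supp ∧ u ≠ w ∧ ¬ H.Adj u w := by
    by_contra hcon
    push_neg at hcon
    exact hNC₀ (fun a ha b hb hab => hcon a b ha hb hab)
  have hm₁nbr : ∃ z, z ∈ c₀.supp ∧ H.Adj m₁ z := by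
    obtain ⟨u, w, hu, hw, huw, -⟩ := hc₀two
    by_cases h : m₁ = u
    · obtain ⟨z, hz1, hz2⟩ := exists_nbr_of_mem_supp hm₁c hw (h ▸ huw)
      exact ⟨z, hz1, hz2⟩
    · obtain ⟨z, hz1, hz2⟩ := exists_nbr_of_mem_supp hm₁c hu h
      exact ⟨z, hz1, hz2⟩
  have conclude : ∀ φ : V → Sym2 V, (∀ m ∈ M, φ m ∈ F) → Set.InjOn φ M → M.ncard ≤ k := by
    intro φ h1 h2
    have h3 := Set.ncard_le_ncard_of_injOn φ (fun a ha => Finset.mem_coe.mpr (h1 a ha)) h2 F.finite_toSet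
    rw [Set.ncard_coe_finset] at h3
    exact h3.trans hk
  have minc : ∀ F' : Finset (Sym2 V), F' ⊆ F → (∃ e ∈ F, e ∉ F') →
      IsLCluster ℓ (editGraph G F') → False := by
    rintro F' hsub ⟨e, heF, heF'⟩ hlc
    have hes : IsEditionSet F' := fun e' he' => hF e' (hsub he')
    have h1 := hmin F' hes hlc
    have hlt : F'.card < F.card :=
      Finset.card_lt_card ((Finset.ssubset_iff_of_subset hsub).mpr ⟨e, heF, heF'⟩)
    omega
  have sym2ne : ∀ (a b c d : V), s(a,b) = s(c,d) → (a = c ∧ b = d) ∨ (a = d ∧ b = c) := by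
    intro a b c d h
    rwa [Sym2.eq_iff] at h
  by_cases hI : ∃ m ∈ M, ∀ z, s(m, z) ∉ F
  · -- CASE I : an untouched vertex exists
    obtain ⟨mst, hmstM, hmst⟩ := hI
    by_cases hIa : H.connectedComponentMk mst = c₀
    · -- I.a : untouched vertex in the ℓ-clique component: contradiction
      have hcBclique : H.IsClique cB.supp := (hOther cB ⟨m₂, hm₂M, hm₂c⟩ hcBne).1
      have hcB2 : 2 ≤ cB.supp.ncard := (hOther cB ⟨m₂, hm₂M, hm₂c⟩ hcBne).2
      have hm₂comp : H.connectedComponentMk m₂ = cB := comp_eq_of_mem_supp hm₂c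
      have hne2 : H.connectedComponentMk m₂ ≠ H.connectedComponentMk mst := by
        rw [hm₂comp, hIa]; exact hcBne
      have htouch : ∃ z, s(m₂, z) ∈ F := by
        obtain ⟨w, hwB, hwne⟩ := Set.exists_ne_of_one_lt_ncard (s := cB.supp) (by omega) m₂
        have hadj : H.Adj m₂ w := hcBclique hm₂c hwB (Ne.symm hwne)
        by_cases hwM : w ∈ M
        · exact ⟨w, (hMM m₂ hm₂M w hwM (Ne.symm hwne)).mpr hadj⟩
        · by_cases hsF : s(m₂, w) ∈ F
          · exact ⟨w, hsF⟩
          · exfalso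
            have hg : G.Adj m₂ w := by
              rcases (hH m₂ w).mp hadj with ⟨-, (⟨hg, -⟩ | ⟨hmem, -⟩)⟩
              · exact hg
              · exact absurd hmem hsF
            have hgst : G.Adj mst w := (hGadj mst hmstM w).mpr ((hGadj m₂ hm₂M w).mp hg)
            have hHst : H.Adj mst w := by
              rw [hH]
              exact ⟨hgst.ne, Or.inl ⟨hgst, hmst w⟩⟩
            have hwc : w ∈ (H.connectedComponentMk mst).supp :=
              mem_supp_of_adj (self_mem_supp mst) hHst
            rw [ConnectedComponent.mem_supp_iff, hIa] at hwc
            exact hcBne ((comp_eq_of_mem_supp hwB).symm.trans hwc)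
      obtain ⟨zt, hzt⟩ := htouch
      set F' := F.filter (fun e => m₂ ∉ e) with hF'def
      have hmemF' : ∀ x y : V, m₂ ≠ x → m₂ ≠ y → (s(x,y) ∈ F' ↔ s(x,y) ∈ F) := by
        intro x y hx hy
        rw [hF'def, Finset.mem_filter]
        simp only [Sym2.mem_iff, not_or]
        tauto
      have ha : ∀ x y, m₂ ≠ x → m₂ ≠ y → ((editGraph G F').Adj x y ↔ H.Adj x y) := by
        intro x y hx hy
        rw [editGraph_adj, hH x y, hmemF' x y hx hy]
      have hb : ∀ b, (editGraph G F').Adj m₂ b ↔ H.Adj mst b := by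
        intro b
        have h1 : s(m₂, b) ∉ F' := by
          rw [hF'def, Finset.mem_filter]
          simp [Sym2.mem_iff]
        have h2 : s(mst, b) ∉ F := hmst b
        rw [editGraph_adj, hH mst b]
        constructor
        · rintro ⟨hne, (⟨hg, -⟩ | ⟨hmem, -⟩)⟩
          · have hgs : G.Adj mst b := (hGadj mst hmstM b).mpr ((hGadj m₂ hm₂M b).mp hg)
            exact ⟨hgs.ne, Or.inl ⟨hgs, h2⟩⟩
          · exact absurd hmem h1
        · rintro ⟨hne, (⟨hg, -⟩ | ⟨hmem, -⟩)⟩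
          · have hgs : G.Adj m₂ b := (hGadj m₂ hm₂M b).mpr ((hGadj mst hmstM b).mp hg)
            exact ⟨hgs.ne, Or.inl ⟨hgs, h1⟩⟩
          · exact absurd hmem h2
      have hEll' : IsEllCliqueOn ℓ H (H.connectedComponentMk mst).supp := by
        rw [hIa]; exact hEll₀
      have hclique₂ : H.IsClique (H.connectedComponentMk m₂).supp := by
        rw [hm₂comp]; exact hcBclique
      have hz : ∃ z, H.Adj mst z := by
        have hmstc : mst ∈ c₀.supp := hIa
        obtain ⟨u, w, hu, hw, huw, -⟩ := hc₀two
        by_cases h : mst = u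
        · obtain ⟨z, -, hz2⟩ := exists_nbr_of_mem_supp hmstc hw (h ▸ huw)
          exact ⟨z, hz2⟩
        · obtain ⟨z, -, hz2⟩ := exists_nbr_of_mem_supp hmstc hu h
          exact ⟨z, hz2⟩
      have hlc : IsLCluster ℓ (editGraph G F') := exchange1 hL ha hb hne2 hEll' hclique₂ hz
      exact (minc F' (Finset.filter_subset _ _)
        ⟨s(m₂, zt), hzt, by rw [hF'def, Finset.mem_filter]; simp [Sym2.mem_iff]⟩ hlc).elim
    · -- I.b : untouched vertex in a clique component: count
      set cS := H.connectedComponentMk mst with hcSdef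
      have hclS : H.IsClique cS.supp := (hOther cS ⟨mst, hmstM, self_mem_supp mst⟩ hIa).1
      have hcS2 : 2 ≤ cS.supp.ncard := (hOther cS ⟨mst, hmstM, self_mem_supp mst⟩ hIa).2
      have honly : ∀ m ∈ M, m ≠ mst → m ∉ cS.supp := by
        intro m hm hne hmem
        have hadj : H.Adj m mst := hclS hmem (self_mem_supp mst) hne
        have hmem2 : s(m, mst) ∈ F := (hMM m hm mst hmstM hne).mpr hadj
        rw [Sym2.eq_swap] at hmem2
        exact hmst m hmem2
      have hNchar : ∀ w, G.Adj v w ↔ (w ∈ cS.supp ∧ w ≠ mst) := by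
        intro w
        constructor
        · intro hw
          have hgm : G.Adj mst w := (hGadj mst hmstM w).mpr hw
          have hHm : H.Adj mst w := by
            rw [hH]; exact ⟨hgm.ne, Or.inl ⟨hgm, hmst w⟩⟩
          exact ⟨mem_supp_of_adj (self_mem_supp mst) hHm, hgm.ne.symm⟩
        · rintro ⟨hmem, hne⟩
          have hadj : H.Adj mst w := hclS (self_mem_supp mst) hmem (fun h => hne h.symm)
          rcases (hH mst w).mp hadj with ⟨-, (⟨hg, -⟩ | ⟨hmem2, -⟩)⟩
          · exact (hGadj mst hmstM w).mp hg
          · exact absurd hmem2 (hmst w)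
      obtain ⟨x₀, hx₀S, hx₀ne⟩ := Set.exists_ne_of_one_lt_ncard (s := cS.supp) (by omega) mst
      have hx₀M : x₀ ∉ M := fun h => honly x₀ h hx₀ne hx₀S
      have hvx₀ : G.Adj v x₀ := (hNchar x₀).mpr ⟨hx₀S, hx₀ne⟩
      have hcompx₀ : H.connectedComponentMk x₀ = cS := comp_eq_of_mem_supp hx₀S
      have hedge : ∀ m ∈ M, m ≠ mst → s(m, x₀) ∈ F := by
        intro m hm hne
        apply hcross m hm x₀ hvx₀
        rw [hcompx₀]
        intro h
        exact honly m hm hne (by rw [ConnectedComponent.mem_supp_iff, h])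
      have hspare : ∃ t, s(m₁, t) ∈ F ∧ t ≠ x₀ := by
        by_cases hN2 : ∃ y₂, G.Adj v y₂ ∧ y₂ ≠ x₀
        · obtain ⟨y₂, hy₂, hy₂ne⟩ := hN2
          refine ⟨y₂, hcross m₁ hm₁M y₂ hy₂ ?_, hy₂ne⟩
          rw [comp_eq_of_mem_supp hm₁c, comp_eq_of_mem_supp ((hNchar y₂).mp hy₂).1]
          exact fun h => hIa h.symm
        · push_neg at hN2
          obtain ⟨z, hzc, hzadj⟩ := hm₁nbr
          have hzne : z ≠ x₀ := by
            intro h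
            apply hIa
            calc cS = H.connectedComponentMk x₀ := (comp_eq_of_mem_supp hx₀S).symm
            _ = H.connectedComponentMk z := by rw [h]
            _ = c₀ := comp_eq_of_mem_supp hzc
          refine ⟨z, ?_, hzne⟩
          by_contra hns
          have hg : G.Adj m₁ z := by
            rcases (hH m₁ z).mp hzadj with ⟨-, (⟨hg, -⟩ | ⟨hmem2, -⟩)⟩
            · exact hg
            · exact absurd hmem2 hns
          exact hzne (hN2 z ((hGadj m₁ hm₁M z).mp hg))
      obtain ⟨t, htF, htne⟩ := hspare
      refine conclude (fun m => if m = mst then s(m₁, t) else s(m, x₀)) ?_ ?_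
      · intro m hm
        by_cases h : m = mst
        · rw [if_pos h]; exact htF
        · rw [if_neg h]; exact hedge m hm h
      · intro a ha b hb hab
        dsimp only at hab
        by_cases haS : a = mst <;> by_cases hbS : b = mst
        · rw [haS, hbS]
        · rw [if_pos haS, if_neg hbS] at hab
          rcases sym2ne _ _ _ _ hab with ⟨h1, h2⟩ | ⟨h1, h2⟩
          · exact absurd h2 htne
          · exact absurd (h1 ▸ hm₁M) hx₀M
        · rw [if_neg haS, if_pos hbS] at hab
          rcases sym2ne _ _ _ _ hab with ⟨h1, h2⟩ | ⟨h1, h2⟩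
          · exact absurd h2.symm htne
          · exact absurd (h2 ▸ hm₁M) hx₀M
        · rw [if_neg haS, if_neg hbS] at hab
          rcases sym2ne _ _ _ _ hab with ⟨h1, -⟩ | ⟨h1, h2⟩
          · exact h1
          · exact absurd (h1 ▸ ha) hx₀M
  · -- CASE II : every vertex of M is touched
    push_neg at hI
    obtain ⟨y₀, hy₀⟩ := hNne
    have hy₀M : y₀ ∉ M := hNmem y₀ hy₀
    by_cases hBad : ∃ m ∈ M, ∀ z, s(m,z) ∈ F → z ∈ M
    · obtain ⟨d, hdM, hd⟩ := hBad
      have hNsub : ∀ w, G.Adj v w → w ∈ (H.connectedComponentMk d).supp := by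
        intro w hw
        have hgd : G.Adj d w := (hGadj d hdM w).mpr hw
        have hns : s(d, w) ∉ F := fun h => hNmem w hw (hd w h)
        have hadj : H.Adj d w := by rw [hH]; exact ⟨hgd.ne, Or.inl ⟨hgd, hns⟩⟩
        exact mem_supp_of_adj (self_mem_supp d) hadj
      have hBadComp : ∀ m ∈ M, (∀ z, s(m,z) ∈ F → z ∈ M) →
          H.connectedComponentMk m = H.connectedComponentMk d := by
        intro m hm hmbad
        by_contra hne
        have hy₀c : H.connectedComponentMk y₀ = H.connectedComponentMk d :=
          comp_eq_of_mem_supp (hNsub y₀ hy₀)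
        have hmem : s(m, y₀) ∈ F := hcross m hm y₀ hy₀ (by rw [hy₀c]; exact hne)
        exact hy₀M (hmbad y₀ hmem)
      by_cases hcs : H.connectedComponentMk d = c₀
      · -- II.a : bad vertices live in the ℓ-clique component
        by_cases hAdj2 : ∃ a ∈ M, ∃ b ∈ M, (∀ z, s(a,z) ∈ F → z ∈ M) ∧
            (∀ z, s(b,z) ∈ F → z ∈ M) ∧ s(a,b) ∈ F
        · -- II.a.1 : two adjacent bad vertices: Exchange 3 contradiction
          obtain ⟨da, hdaM, db, hdbM, hdaBad, hdbBad, hdabF⟩ := hAdj2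
          have hdac : H.connectedComponentMk da = c₀ := (hBadComp da hdaM hdaBad).trans hcs
          have hdbc : H.connectedComponentMk db = c₀ := (hBadComp db hdbM hdbBad).trans hcs
          have hdane : da ≠ db := hFnd _ _ hdabF
          have hdabH : H.Adj da db := (hMM da hdaM db hdbM hdane).mp hdabF
          have hbadadj : ∀ b₀ ∈ M, (∀ z, s(b₀,z) ∈ F → z ∈ M) → ∀ x, x ∉ M →
              (H.Adj b₀ x ↔ G.Adj v x) := by
            intro b₀ hb₀M hb₀bad x hxM
            constructor
            · intro hadj
              rcases (hH b₀ x).mp hadj with ⟨-, (⟨hg, -⟩ | ⟨hmem, -⟩)⟩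
              · exact (hGadj b₀ hb₀M x).mp hg
              · exact absurd (hb₀bad x hmem) hxM
            · intro hg
              have hgb : G.Adj b₀ x := (hGadj b₀ hb₀M x).mpr hg
              rw [hH]
              exact ⟨hgb.ne, Or.inl ⟨hgb, fun h => hxM (hb₀bad x h)⟩⟩
          obtain ⟨hconn₀, f, hf⟩ := hEll₀
          have hsuppAN : c₀.supp = (M ∩ c₀.supp) ∪ {w | G.Adj v w} := by
            apply Set.Subset.antisymm
            · intro x hx
              by_cases hxM : x ∈ M
              · exact Or.inl ⟨hxM, hx⟩
              · by_cases hxN : G.Adj v x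
                · exact Or.inr hxN
                · exfalso
                  have h1 : ¬ H.Adj da x := fun h => hxN ((hbadadj da hdaM hdaBad x hxM).mp h)
                  have h2 : ¬ H.Adj db x := fun h => hxN ((hbadadj db hdbM hdbBad x hxM).mp h)
                  have hxda : da ≠ x := fun h => hxM (h ▸ hdaM)
                  have hxdb : db ≠ x := fun h => hxM (h ▸ hdbM)
                  have hda0 : da ∈ c₀.supp := hdac
                  have hdb0 : db ∈ c₀.supp := hdbc
                  have hfa : f da = f x := by
                    by_contra hne
                    exact h1 ((hf da hda0 x hx hxda).mpr hne)
                  have hfb : f db = f x := by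
                    by_contra hne
                    exact h2 ((hf db hdb0 x hx hxdb).mpr hne)
                  exact (hf da hda0 db hdb0 hdane).mp hdabH (hfa.trans hfb.symm)
            · rintro x (⟨-, hx⟩ | hxN)
              · exact hx
              · exact (comp_eq_of_mem_supp (hNsub x hxN)).trans hcs
          set F' := F.filter (fun e => ∀ x ∈ e, x ∉ (M ∩ c₀.supp : Set V)) with hF'def
          have hmF' : ∀ x y : V, (s(x,y) ∈ F' ↔
              s(x,y) ∈ F ∧ x ∉ (M ∩ c₀.supp : Set V) ∧ y ∉ (M ∩ c₀.supp : Set V)) := by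
            intro x y
            rw [hF'def, Finset.mem_filter]
            constructor
            · rintro ⟨h1, h2⟩
              exact ⟨h1, h2 x (Sym2.mem_mk_left x y), h2 y (Sym2.mem_mk_right x y)⟩
            · rintro ⟨h1, h2, h3⟩
              refine ⟨h1, ?_⟩
              intro z hz
              rcases Sym2.mem_iff.mp hz with h | h
              · rw [h]; exact h2
              · rw [h]; exact h3
          have ha3 : ∀ x y, x ∉ (M ∩ c₀.supp : Set V) → y ∉ (M ∩ c₀.supp : Set V) →
              ((editGraph G F').Adj x y ↔ H.Adj x y) := by
            intro x y hx hy
            have hmm : (s(x,y) ∈ F') ↔ (s(x,y) ∈ F) := by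
              rw [hmF']
              tauto
            rw [editGraph_adj, hH x y, hmm]
          have hb3 : ∀ a ∈ (M ∩ c₀.supp : Set V), ∀ b,
              ((editGraph G F').Adj a b ↔ b ∈ {w | G.Adj v w}) := by
            intro a haA b
            have h1 : s(a, b) ∉ F' := by
              rw [hmF']
              rintro ⟨-, h2, -⟩
              exact h2 haA
            rw [editGraph_adj]
            constructor
            · rintro ⟨hne, (⟨hg, -⟩ | ⟨hmem, -⟩)⟩
              · exact (hGadj a haA.1 b).mp hg
              · exact absurd hmem h1
            · intro hg
              have hga : G.Adj a b := (hGadj a haA.1 b).mpr hg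
              exact ⟨hga.ne, Or.inl ⟨hga, h1⟩⟩
          have hdA : d ∈ (M ∩ c₀.supp : Set V) := ⟨hdM, hcs⟩
          have hAN : ∀ x, x ∈ (M ∩ c₀.supp : Set V) → x ∉ {w | G.Adj v w} :=
            fun x hx hn => hNmem x hn hx.1
          have hsupp3 : (H.connectedComponentMk d).supp
              = (M ∩ c₀.supp : Set V) ∪ {w | G.Adj v w} := by
            rw [hcs]; exact hsuppAN
          have hdN3 : ∀ y ∈ {w | G.Adj v w}, H.Adj d y := by
            intro y hyN
            exact (hbadadj d hdM hd y (hNmem y hyN)).mpr hyN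
          have hcolor : ∃ f' : V → Fin ℓ, ∀ x ∈ (M ∩ c₀.supp : Set V) ∪ {w | G.Adj v w},
              ∀ y ∈ (M ∩ c₀.supp : Set V) ∪ {w | G.Adj v w}, x ≠ y →
              (H.Adj x y ↔ f' x ≠ f' y) := by
            refine ⟨f, ?_⟩
            rw [← hsuppAN]
            exact hf
          have hlc : IsLCluster ℓ (editGraph G F') :=
            exchange3 hL ha3 hb3 hdA (hy₀ : y₀ ∈ {w | G.Adj v w}) hAN hsupp3 hdN3 hcolor
          refine (minc F' (Finset.filter_subset _ _) ⟨s(da,db), hdabF, ?_⟩ hlc).elim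
          rw [hmF']
          rintro ⟨-, h2, -⟩
          exact h2 ⟨hdaM, hdac⟩
        · -- II.a.2 : injection
          push_neg at hAdj2
          have hQ : ∀ m ∈ M, ∃ z, s(m,z) ∈ F ∧ (z ∈ M →
              ((∀ w, s(m,w) ∈ F → w ∈ M) ∧ ¬(∀ w, s(z,w) ∈ F → w ∈ M))) := by
            intro m hm
            by_cases hmbad : ∀ w, s(m,w) ∈ F → w ∈ M
            · obtain ⟨z, hz⟩ := hI m hm
              have hzM : z ∈ M := hmbad z hz
              refine ⟨z, hz, fun _ => ⟨hmbad, ?_⟩⟩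
              intro hzbad
              exact (hAdj2 m hm z hzM hmbad hzbad) hz
            · push_neg at hmbad
              obtain ⟨z, hzF, hzM⟩ := hmbad
              exact ⟨z, hzF, fun h => absurd h hzM⟩
          choose! zf hzf using hQ
          refine conclude (fun m => s(m, zf m)) (fun m hm => (hzf m hm).1) ?_
          intro a ha b hb hab
          dsimp only at hab
          rcases sym2ne _ _ _ _ hab with ⟨h1, -⟩ | ⟨h1, h2⟩
          · exact h1
          · exfalso
            have hq1 := (hzf a ha).2 (by rw [h2]; exact hb)
            have hq2 := (hzf b hb).2 (by rw [← h1]; exact ha)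
            rw [h2] at hq1
            rw [← h1] at hq2
            exact hq1.2 hq2.1
      · -- II.b : bad vertices live in a clique component
        have hclS : H.IsClique (H.connectedComponentMk d).supp :=
          (hOther _ ⟨d, hdM, self_mem_supp d⟩ hcs).1
        obtain ⟨d', hd'F⟩ := hI d hdM
        have hd'M : d' ∈ M := hd d' hd'F
        have hdd' : d ≠ d' := hFnd _ _ hd'F
        have hd'H : H.Adj d d' := (hMM d hdM d' hd'M hdd').mp hd'F
        have hd'c : d' ∈ (H.connectedComponentMk d).supp :=
          mem_supp_of_adj (self_mem_supp d) hd'H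
        have hy₀c : y₀ ∈ (H.connectedComponentMk d).supp := hNsub y₀ hy₀
        have hy₀d : y₀ ≠ d := fun h => hy₀M (h ▸ hdM)
        have hy₀d' : y₀ ≠ d' := fun h => hy₀M (h ▸ hd'M)
        have hedge : ∀ m ∈ M, H.connectedComponentMk m ≠ H.connectedComponentMk d →
            s(m, y₀) ∈ F := by
          intro m hm hne
          exact hcross m hm y₀ hy₀ (by rw [comp_eq_of_mem_supp hy₀c]; exact hne)
        have hm₁ne : H.connectedComponentMk m₁ ≠ H.connectedComponentMk d := by
          rw [comp_eq_of_mem_supp hm₁c]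
          exact fun h => hcs h.symm
        have hm₁d : m₁ ≠ d := fun h => hm₁ne (by rw [h])
        have hSedge : ∀ m ∈ M, m ∈ (H.connectedComponentMk d).supp → m ≠ d → s(d, m) ∈ F := by
          intro m hm hmc hmd
          exact (hMM d hdM m hm (fun h => hmd h.symm)).mpr (hclS (self_mem_supp d) hmc (fun h => hmd h.symm))
        by_cases hsp : (∃ y₂, G.Adj v y₂ ∧ y₂ ≠ y₀) ∨
            (∃ d'', d'' ∈ M ∧ d'' ∈ (H.connectedComponentMk d).supp ∧ d'' ≠ d ∧ d'' ≠ d')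
        · -- a spare edge exists: count
          have hspare : ∃ p q : V, s(p,q) ∈ F ∧ p ≠ d ∧ q ≠ d ∧ p ≠ y₀ ∧ q ≠ y₀ := by
            rcases hsp with ⟨y₂, hy₂, hy₂ne⟩ | ⟨d'', hd''M, hd''c, hd''d, hd''d'⟩
            · have hy₂M : y₂ ∉ M := hNmem y₂ hy₂
              refine ⟨m₁, y₂, ?_, hm₁d, fun h => hy₂M (h ▸ hdM), fun h => hy₀M (h ▸ hm₁M), hy₂ne⟩
              exact hcross m₁ hm₁M y₂ hy₂
                (by rw [comp_eq_of_mem_supp (hNsub y₂ hy₂)]; exact hm₁ne)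
            · have hmemF : s(d', d'') ∈ F :=
                (hMM d' hd'M d'' hd''M (fun h => hd''d' h.symm)).mpr
                  (hclS hd'c hd''c (fun h => hd''d' h.symm))
              exact ⟨d', d'', hmemF, fun h => hdd' h.symm, hd''d,
                fun h => hy₀M (h ▸ hd'M), fun h => hy₀M (h ▸ hd''M)⟩
          obtain ⟨p, q, hpqF, hpd, hqd, hpy, hqy⟩ := hspare
          refine conclude (fun m => if m = d then s(p, q)
            else if H.connectedComponentMk m = H.connectedComponentMk d then s(d, m)
            else s(m, y₀)) ?_ ?_
          · intro m hm
            by_cases h1 : m = d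
            · rw [if_pos h1]; exact hpqF
            · rw [if_neg h1]
              by_cases h2 : H.connectedComponentMk m = H.connectedComponentMk d
              · rw [if_pos h2]
                exact hSedge m hm h2 h1
              · rw [if_neg h2]
                exact hedge m hm h2
          · intro a ha b hb hab
            dsimp only at hab
            by_cases ha1 : a = d <;> by_cases hb1 : b = d
            · rw [ha1, hb1]
            · exfalso
              rw [if_pos ha1, if_neg hb1] at hab
              by_cases hb2 : H.connectedComponentMk b = H.connectedComponentMk d
              · rw [if_pos hb2] at hab
                rcases sym2ne _ _ _ _ hab with ⟨h3, -⟩ | ⟨-, h4⟩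
                · exact hpd h3
                · exact hqd h4
              · rw [if_neg hb2] at hab
                rcases sym2ne _ _ _ _ hab with ⟨-, h4⟩ | ⟨h3, -⟩
                · exact hqy h4
                · exact hpy h3
            · exfalso
              rw [if_neg ha1, if_pos hb1] at hab
              by_cases ha2 : H.connectedComponentMk a = H.connectedComponentMk d
              · rw [if_pos ha2] at hab
                rcases sym2ne _ _ _ _ hab with ⟨h3, -⟩ | ⟨h3, -⟩
                · exact hpd h3.symm
                · exact hqd h3.symm
              · rw [if_neg ha2] at hab
                rcases sym2ne _ _ _ _ hab with ⟨h3, h4⟩ | ⟨h3, h4⟩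
                · exact hqy h4.symm
                · exact hpy h4.symm
            · rw [if_neg ha1, if_neg hb1] at hab
              by_cases ha2 : H.connectedComponentMk a = H.connectedComponentMk d <;>
                by_cases hb2 : H.connectedComponentMk b = H.connectedComponentMk d
              · rw [if_pos ha2, if_pos hb2] at hab
                rcases sym2ne _ _ _ _ hab with ⟨-, h4⟩ | ⟨h3, -⟩
                · exact h4
                · exact absurd h3.symm hb1
              · exfalso
                rw [if_pos ha2, if_neg hb2] at hab
                rcases sym2ne _ _ _ _ hab with ⟨h3, h4⟩ | ⟨h3, h4⟩
                · exact hy₀M (h4 ▸ ha)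
                · exact hy₀d h3.symm
              · exfalso
                rw [if_neg ha2, if_pos hb2] at hab
                rcases sym2ne _ _ _ _ hab with ⟨h3, h4⟩ | ⟨h3, h4⟩
                · exact hy₀M (h4.symm ▸ hb)
                · exact hy₀d h4
              · rw [if_neg ha2, if_neg hb2] at hab
                rcases sym2ne _ _ _ _ hab with ⟨h3, -⟩ | ⟨h3, h4⟩
                · exact h3
                · exact absurd (h3 ▸ ha) hy₀M
        · -- no spare edge: tiny component, Exchange 2 contradiction
          push_neg at hsp
          obtain ⟨hN1, hS2⟩ := hsp
          have hsupp2 : (H.connectedComponentMk d).supp = {d, d', y₀} := by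
            apply Set.Subset.antisymm
            · intro x hx
              by_cases hxM : x ∈ M
              · rcases eq_or_ne x d with h | h
                · exact Or.inl h
                · rcases eq_or_ne x d' with h' | h'
                  · exact Or.inr (Or.inl h')
                  · exact absurd (hS2 x hxM hx h) h'
              · by_cases hxd : x = d
                · exact Or.inl hxd
                · have hadj : H.Adj d x := hclS (self_mem_supp d) hx (fun h => hxd h.symm)
                  rcases (hH d x).mp hadj with ⟨-, (⟨hg, -⟩ | ⟨hmem, -⟩)⟩
                  · exact Or.inr (Or.inr (hN1 x ((hGadj d hdM x).mp hg)))
                  · exact absurd (hd x hmem) hxM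
            · rintro x (h | h | h)
              · rw [h]; exact self_mem_supp d
              · rw [h]; exact hd'c
              · rw [h]; exact hy₀c
          set F' := F.erase s(d,d') with hF'def
          have ha2 : ∀ x y, ¬(x = d ∧ y = d') → ¬(x = d' ∧ y = d) →
              ((editGraph G F').Adj x y ↔ H.Adj x y) := by
            intro x y hc1 hc2
            have hne' : s(x,y) ≠ s(d,d') := by
              intro h
              rcases sym2ne _ _ _ _ h with h' | h'
              · exact hc1 h'
              · exact hc2 h'
            have hmm : (s(x,y) ∈ F') ↔ (s(x,y) ∈ F) := by
              rw [hF'def, Finset.mem_erase]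
              exact ⟨fun h => h.2, fun h => ⟨hne', h⟩⟩
            rw [editGraph_adj, hH x y, hmm]
          have hb2 : ¬ (editGraph G F').Adj d d' := by
            rw [editGraph_adj]
            rintro ⟨-, (⟨hg, -⟩ | ⟨hmem, -⟩)⟩
            · exact hindep d hdM d' hd'M hdd' hg
            · exact (Finset.notMem_erase _ _) (hF'def ▸ hmem)
          have hlc : IsLCluster ℓ (editGraph G F') :=
            exchange2 hℓ hL ha2 hb2 hdd' (Ne.symm hy₀d) (Ne.symm hy₀d') hsupp2 hclS
          exact (minc F' (Finset.erase_subset _ _)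
            ⟨s(d,d'), hd'F, by rw [hF'def]; exact Finset.notMem_erase _ _⟩ hlc).elim
    · -- II.0 : no bad vertices: direct injection
      push_neg at hBad
      choose! zfun hz1 hz2 using hBad
      refine conclude (fun m => s(m, zfun m)) (fun m hm => hz1 m hm) ?_
      intro a ha b hb hab
      dsimp only at hab
      rcases sym2ne _ _ _ _ hab with ⟨h1, -⟩ | ⟨h1, h2⟩
      · exact h1
      · exact absurd (h1 ▸ ha) (hz2 b hb)
end

section
/- Let ℓ ≥ 2, let k ≥ 0 be an integer, and let G be a finite simple graph none of whose connected components is a clique or an ℓ-clique. Suppose that there exists an edition set F for G with |F| ≤ k such that G+F is an L-cluster graph, that every twin class of G consisting of pairwise false twins has size at most k+2, and that every twin class of G consisting of pairwise true twins has size at most ℓ+k+1. Then the number of vertices of G is at most 2ℓk(k+2) + 2k(ℓ+k+1); in particular, G has O(ℓk²) vertices. -/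
open SimpleGraph

variable {V : Type*}

section KernelHelpers

variable {V : Type*}

lemma editGraph_adj_of_not_mem {G : SimpleGraph V} {F : Finset (Sym2 V)}
    {a b : V} (h : s(a,b) ∉ F) : (editGraph G F).Adj a b ↔ G.Adj a b := by
  rw [editGraph, fromEdgeSet_adj, Set.mem_symmDiff]
  constructor
  · rintro ⟨(⟨h1, _⟩ | ⟨h1, _⟩), hne⟩
    · exact h1
    · exact absurd h1 h
  · intro hadj
    exact ⟨Or.inl ⟨hadj, h⟩, hadj.ne⟩

lemma editGraph_adj_untouched {G : SimpleGraph V} {F : Finset (Sym2 V)}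
    {a : V} (h : ∀ e ∈ F, a ∉ e) (b : V) :
    (editGraph G F).Adj a b ↔ G.Adj a b :=
  editGraph_adj_of_not_mem (fun hm => h _ hm (Sym2.mem_mk_left a b))

lemma twinClass_clique {G : SimpleGraph V} {u v : V}
    (htw : IsTwinPair G u v) (hadj : G.Adj u v) :
    ∀ x ∈ twinClass G u, ∀ y ∈ twinClass G u, x ≠ y → G.Adj x y := by
  have step1 : ∀ y ∈ twinClass G u, y ≠ u → G.Adj u y := by
    intro y hy hyu
    rcases hy with h | h
    · exact absurd h hyu
    · by_cases hyv : y = v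
      · subst hyv; exact hadj
      · have hv : G.Adj v y := (h.2 v (Ne.symm hadj.ne) (Ne.symm hyv)).mp hadj.symm
        exact ((htw.2 y hyu hyv).mpr hv.symm).symm
  intro x hx y hy hxy
  by_cases hxu : x = u
  · subst hxu; exact step1 y hy (Ne.symm hxy)
  by_cases hyu : y = u
  · subst hyu; exact (step1 x hx hxy).symm
  · rcases hx with h | h
    · exact absurd h hxu
    · exact ((h.2 y hyu (Ne.symm hxy)).mp (step1 y hy hyu).symm).symm

lemma twinClass_indep {G : SimpleGraph V} {u v : V}
    (htw : IsTwinPair G u v) (hnadj : ¬ G.Adj u v) :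
    ∀ x ∈ twinClass G u, ∀ y ∈ twinClass G u, x ≠ y → ¬ G.Adj x y := by
  have huv : u ≠ v := htw.1
  have step1 : ∀ y ∈ twinClass G u, y ≠ u → ¬ G.Adj u y := by
    intro y hy hyu hadj
    rcases hy with h | h
    · exact hyu h
    · by_cases hyv : y = v
      · subst hyv; exact hnadj hadj
      · have hvny : ¬ G.Adj v y := fun hh =>
          hnadj (((h.2 v (Ne.symm huv) (Ne.symm hyv)).mpr hh).symm)
        exact hvny ((htw.2 y hyu hyv).mp hadj.symm).symm
  intro x hx y hy hxy hadj
  by_cases hxu : x = u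
  · subst hxu; exact step1 y hy (Ne.symm hxy) hadj
  by_cases hyu : y = u
  · subst hyu; exact step1 x hx hxy hadj.symm
  · rcases hx with h | h
    · exact hxu h
    · exact step1 y hy hyu (((h.2 y hyu (Ne.symm hxy)).mpr hadj.symm).symm)

lemma exists_touched {G G' : SimpleGraph V} {F : Finset (Sym2 V)} {ℓ : ℕ}
    (hadj : ∀ a : V, (∀ e ∈ F, a ∉ e) → ∀ b, (G'.Adj a b ↔ G.Adj a b))
    (hL : IsLCluster ℓ G')
    (hG : ∀ c : G.ConnectedComponent,
      ¬ (G.IsClique c.supp ∨ IsEllCliqueOn ℓ G c.supp))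
    (c : G'.ConnectedComponent) :
    ∃ v, G'.connectedComponentMk v = c ∧ ∃ e ∈ F, v ∈ e := by
  by_contra hcon
  push_neg at hcon
  obtain ⟨v₀, hv₀⟩ := Quot.exists_rep c
  have hv₀ : G'.connectedComponentMk v₀ = c := hv₀
  have W1 : ∀ (a w : V) (p : G'.Walk a w), G'.connectedComponentMk a = c →
      G.Reachable a w := by
    intro a w p
    induction p with
    | nil => exact fun _ => Reachable.refl _
    | @cons x y z h p ih =>
      intro ha
      have hy : G'.connectedComponentMk y = c := by
        rw [← ha]; exact ConnectedComponent.eq.mpr h.symm.reachable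
      have hxy : G.Adj x y := (hadj x (hcon x ha) y).mp h
      exact hxy.reachable.trans (ih hy)
  have W2 : ∀ (a w : V) (p : G.Walk a w), G'.connectedComponentMk a = c →
      G'.connectedComponentMk w = c := by
    intro a w p
    induction p with
    | nil => exact fun h => h
    | @cons x y z h p ih =>
      intro ha
      have hxy : G'.Adj x y := (hadj x (hcon x ha) y).mpr h
      have hy : G'.connectedComponentMk y = c := by
        rw [← ha]; exact ConnectedComponent.eq.mpr hxy.symm.reachable
      exact ih hy
  set cG := G.connectedComponentMk v₀ with hcG
  have hsupp : cG.supp = c.supp := by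
    ext w
    simp only [ConnectedComponent.mem_supp_iff]
    constructor
    · intro hw
      have hr : G.Reachable v₀ w := (ConnectedComponent.eq.mp hw).symm
      obtain ⟨p⟩ := hr
      exact W2 v₀ w p hv₀
    · intro hw
      have hr : G'.Reachable v₀ w := ConnectedComponent.eq.mp (hv₀.trans hw.symm)
      obtain ⟨p⟩ := hr
      exact ConnectedComponent.eq.mpr (W1 v₀ w p hv₀).symm
  have hun : ∀ x ∈ c.supp, ∀ e ∈ F, x ∉ e := by
    intro x hx
    exact hcon x ((ConnectedComponent.mem_supp_iff c x).mp hx)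
  refine hG cG ?_
  rcases hL c with hclq | ⟨hconn, f, hf⟩
  · left
    rw [hsupp]
    intro x hx y hy hxy
    exact (hadj x (hun x hx) y).mp (hclq hx hy hxy)
  · right
    rw [hsupp]
    have hind : G.induce c.supp = G'.induce c.supp := by
      ext ⟨x, hx⟩ ⟨y, hy⟩
      simp only [comap_adj, Function.Embedding.coe_subtype]
      exact (hadj x (hun x hx) y).symm
    refine ⟨by rw [hind]; exact hconn, f, fun x hx y hy hxy => ?_⟩
    rw [← hf x hx y hy hxy]
    exact (hadj x (hun x hx) y).symm

lemma comp_untouched_bound [Fintype V] {G G' : SimpleGraph V} {F : Finset (Sym2 V)}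
    {ℓ k : ℕ} (hℓ : 2 ≤ ℓ)
    (hadj : ∀ a : V, (∀ e ∈ F, a ∉ e) → ∀ b, (G'.Adj a b ↔ G.Adj a b))
    (hP : ∀ C ∈ twinClasses G,
      (∀ x ∈ C, ∀ y ∈ C, x ≠ y → ¬ G.Adj x y) → C.ncard ≤ k + 2)
    (hS : ∀ C ∈ twinClasses G,
      (∀ x ∈ C, ∀ y ∈ C, x ≠ y → G.Adj x y) → C.ncard ≤ ℓ + k + 1)
    (c : G'.ConnectedComponent)
    (hc : G'.IsClique c.supp ∨ IsEllCliqueOn ℓ G' c.supp)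
    (U : Finset V)
    (hU : ∀ v ∈ U, G'.connectedComponentMk v = c ∧ ∀ e ∈ F, v ∉ e) :
    U.card ≤ ℓ * (k + 2) := by
  classical
  have hone : 1 ≤ ℓ * (k + 2) := Nat.mul_pos (by omega) (by omega)
  have hGG' : ∀ z w, w ∈ U → (G.Adj z w ↔ G'.Adj z w) := by
    intro z w hw
    constructor
    · intro h; exact ((hadj w (hU w hw).2 z).mpr h.symm).symm
    · intro h; exact ((hadj w (hU w hw).2 z).mp h.symm).symm
  rcases hc with hclq | ⟨hconn, f, hf⟩
  · -- clique component
    rcases Nat.lt_or_ge U.card 2 with hcard | hcard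
    · exact le_trans (by omega) hone
    · obtain ⟨u, hu, v, hv, huv⟩ := Finset.one_lt_card.mp hcard
      have key : ∀ z w, w ∈ U → z ≠ w →
          (G.Adj z w ↔ G'.connectedComponentMk z = c) := by
        intro z w hw hzw
        rw [hGG' z w hw]
        constructor
        · intro h
          exact (ConnectedComponent.eq.mpr h.reachable).trans (hU w hw).1
        · intro h
          exact hclq ((ConnectedComponent.mem_supp_iff c z).mpr h)
            ((ConnectedComponent.mem_supp_iff c w).mpr (hU w hw).1) hzw
      have htwins : ∀ w ∈ U, w ≠ u → IsTwinPair G u w := by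
        intro w hw hwu
        exact ⟨Ne.symm hwu, fun z hzu hzw =>
          (key z u hu hzu).trans (key z w hw hzw).symm⟩
      have hadjuv : G.Adj u v := (key u v hv huv).mpr (hU u hu).1
      have hsub : (U : Set V) ⊆ twinClass G u := by
        intro w hw
        rw [Finset.mem_coe] at hw
        by_cases h : w = u
        · exact Or.inl h
        · exact Or.inr (htwins w hw h)
      have hScl := hS (twinClass G u) ⟨u, rfl⟩
        (twinClass_clique (htwins v hv (Ne.symm huv)) hadjuv)
      have h1 : U.card ≤ (twinClass G u).ncard := by
        rw [← Set.ncard_coe_finset U]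
        exact Set.ncard_le_ncard hsub (Set.toFinite _)
      have h2 : ℓ + k + 1 ≤ ℓ * (k + 2) := by nlinarith
      omega
  · -- ℓ-clique component
    have hsum : U.card = ∑ i : Fin ℓ, (U.filter (fun v => f v = i)).card :=
      Finset.card_eq_sum_card_fiberwise (fun x _ => Finset.mem_univ (f x))
    have hfib : ∀ i : Fin ℓ, (U.filter (fun v => f v = i)).card ≤ k + 2 := by
      intro i
      set Ui := U.filter (fun v => f v = i) with hUidef
      have hmem : ∀ v ∈ Ui, v ∈ U ∧ f v = i := fun v hv => Finset.mem_filter.mp hv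
      rcases Nat.lt_or_ge Ui.card 2 with hcard | hcard
      · omega
      · obtain ⟨u, hu, v, hv, huv⟩ := Finset.one_lt_card.mp hcard
        have key : ∀ z w, w ∈ Ui → z ≠ w →
            (G.Adj z w ↔ (G'.connectedComponentMk z = c ∧ f z ≠ f w)) := by
          intro z w hw hzw
          have hwU := (hmem w hw).1
          rw [hGG' z w hwU]
          constructor
          · intro h
            have hz : G'.connectedComponentMk z = c :=
              (ConnectedComponent.eq.mpr h.reachable).trans (hU w hwU).1
            exact ⟨hz, (hf z ((ConnectedComponent.mem_supp_iff c z).mpr hz)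
              w ((ConnectedComponent.mem_supp_iff c w).mpr (hU w hwU).1) hzw).mp h⟩
          · rintro ⟨hz, hne⟩
            exact (hf z ((ConnectedComponent.mem_supp_iff c z).mpr hz)
              w ((ConnectedComponent.mem_supp_iff c w).mpr (hU w hwU).1) hzw).mpr hne
        have htwins : ∀ w ∈ Ui, w ≠ u → IsTwinPair G u w := by
          intro w hw hwu
          refine ⟨Ne.symm hwu, fun z hzu hzw => ?_⟩
          rw [key z u hu hzu, key z w hw hzw, (hmem u hu).2, (hmem w hw).2]
        have hnadj : ¬ G.Adj u v := by
          intro h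
          exact ((key u v hv huv).mp h).2 (by rw [(hmem u hu).2, (hmem v hv).2])
        have hsub : (Ui : Set V) ⊆ twinClass G u := by
          intro w hw
          rw [Finset.mem_coe] at hw
          by_cases h : w = u
          · exact Or.inl h
          · exact Or.inr (htwins w hw h)
        have hPcl := hP (twinClass G u) ⟨u, rfl⟩
          (twinClass_indep (htwins v hv (Ne.symm huv)) hnadj)
        have h1 : Ui.card ≤ (twinClass G u).ncard := by
          rw [← Set.ncard_coe_finset Ui]
          exact Set.ncard_le_ncard hsub (Set.toFinite _)
        omega
    calc U.card = ∑ i : Fin ℓ, (U.filter (fun v => f v = i)).card := hsum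
      _ ≤ Finset.univ.card • (k + 2) :=
          Finset.sum_le_card_nsmul _ _ _ (fun i _ => hfib i)
      _ = ℓ * (k + 2) := by simp [Finset.card_univ, Fintype.card_fin]

end KernelHelpers

/-- Kernel size: if `G` has no clique or `ℓ`-clique component, admits an
`L`-cluster-editing set of size at most `k`, every P-class has size at most `k + 2`
and every S-class has size at most `ℓ + k + 1`, then `G` has at most
`2ℓk(k+2) + 2k(ℓ+k+1)` vertices. -/
theorem kernel_size [Fintype V] (ℓ k : ℕ) (hℓ : 2 ≤ ℓ) (G : SimpleGraph V)
    (hG : ∀ c : G.ConnectedComponent,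
      ¬ (G.IsClique c.supp ∨ IsEllCliqueOn ℓ G c.supp))
    (hex : ∃ F : Finset (Sym2 V), IsEditionSet F ∧ F.card ≤ k ∧
      IsLCluster ℓ (editGraph G F))
    (hP : ∀ C ∈ twinClasses G,
      (∀ x ∈ C, ∀ y ∈ C, x ≠ y → ¬ G.Adj x y) → C.ncard ≤ k + 2)
    (hS : ∀ C ∈ twinClasses G,
      (∀ x ∈ C, ∀ y ∈ C, x ≠ y → G.Adj x y) → C.ncard ≤ ℓ + k + 1) :
    Fintype.card V ≤ 2 * ℓ * k * (k + 2) + 2 * k * (ℓ + k + 1) := by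
  classical
  obtain ⟨F, hFed, hFcard, hL⟩ := hex
  have hadj : ∀ a : V, (∀ e ∈ F, a ∉ e) → ∀ b,
      ((editGraph G F).Adj a b ↔ G.Adj a b) :=
    fun a h b => editGraph_adj_untouched h b
  set G' := editGraph G F with hG'def
  haveI : Fintype G'.ConnectedComponent :=
    Fintype.ofSurjective G'.connectedComponentMk (fun c => Quot.exists_rep c)
  set Tfin : Finset V := Finset.univ.filter (fun v => ∃ e ∈ F, v ∈ e) with hTdef
  -- bound on the number of touched vertices
  have hTcard : Tfin.card ≤ 2 * k := by
    have h2 : ∀ e : Sym2 V, (Finset.univ.filter (fun v => v ∈ e)).card ≤ 2 := by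
      intro e
      induction e using Sym2.ind with
      | _ x y =>
        have hsub : Finset.univ.filter (fun v => v ∈ s(x,y)) ⊆ {x, y} := by
          intro v hv
          simp only [Finset.mem_filter, Sym2.mem_iff] at hv
          simpa using hv.2
        calc (Finset.univ.filter (fun v => v ∈ s(x,y))).card
            ≤ ({x, y} : Finset V).card := Finset.card_le_card hsub
          _ ≤ ({y} : Finset V).card + 1 := Finset.card_insert_le _ _
          _ ≤ 2 := by simp
    have hsub : Tfin ⊆ F.biUnion (fun e => Finset.univ.filter (fun v => v ∈ e)) := by
      intro v hv
      rw [hTdef, Finset.mem_filter] at hv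
      obtain ⟨-, e, he, hve⟩ := hv
      exact Finset.mem_biUnion.mpr ⟨e, he, Finset.mem_filter.mpr ⟨Finset.mem_univ _, hve⟩⟩
    calc Tfin.card ≤ (F.biUnion (fun e => Finset.univ.filter (fun v => v ∈ e))).card :=
          Finset.card_le_card hsub
      _ ≤ ∑ e ∈ F, (Finset.univ.filter (fun v => v ∈ e)).card :=
          Finset.card_biUnion_le
      _ ≤ F.card • 2 := Finset.sum_le_card_nsmul _ _ _ (fun e _ => h2 e)
      _ ≤ 2 * k := by rw [smul_eq_mul]; omega
  -- every component of G' contains a touched vertex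
  have hTouch : ∀ c : G'.ConnectedComponent,
      ∃ v, G'.connectedComponentMk v = c ∧ ∃ e ∈ F, v ∈ e :=
    exists_touched hadj hL hG
  -- the number of components is at most the number of touched vertices
  have hNcomp : Fintype.card G'.ConnectedComponent ≤ Tfin.card := by
    rw [← Finset.card_univ]
    refine Finset.card_le_card_of_injOn (fun c => (hTouch c).choose) ?_ ?_
    · intro c _
      rw [Finset.mem_coe]
      simp only [hTdef, Finset.mem_filter]
      exact ⟨Finset.mem_univ _, (hTouch c).choose_spec.2⟩
    · intro c _ c' _ h
      dsimp only at h
      rw [← (hTouch c).choose_spec.1, ← (hTouch c').choose_spec.1]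
      exact congrArg _ h
  -- partition of V into components
  have hpart : Fintype.card V = ∑ c : G'.ConnectedComponent,
      (Finset.univ.filter (fun v => G'.connectedComponentMk v = c)).card := by
    rw [← Finset.card_univ]
    exact Finset.card_eq_sum_card_fiberwise (fun x _ => Finset.mem_univ _)
  have hTpart : Tfin.card = ∑ c : G'.ConnectedComponent,
      (Tfin.filter (fun v => G'.connectedComponentMk v = c)).card :=
    Finset.card_eq_sum_card_fiberwise (fun x _ => Finset.mem_univ _)
  have hsplit : ∀ c : G'.ConnectedComponent,
      (Finset.univ.filter (fun v => G'.connectedComponentMk v = c)).card =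
      (Tfin.filter (fun v => G'.connectedComponentMk v = c)).card +
      ((Finset.univ.filter (fun v => G'.connectedComponentMk v = c)) \ Tfin).card := by
    intro c
    rw [← Finset.card_inter_add_card_sdiff
      (Finset.univ.filter (fun v => G'.connectedComponentMk v = c)) Tfin]
    congr 2
    ext v
    simp only [Finset.mem_inter, Finset.mem_filter, Finset.mem_univ, true_and]
    tauto
  have hUb : ∀ c : G'.ConnectedComponent,
      ((Finset.univ.filter (fun v => G'.connectedComponentMk v = c)) \ Tfin).card ≤
        ℓ * (k + 2) := by
    intro c
    refine comp_untouched_bound hℓ hadj hP hS c (hL c) _ ?_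
    intro v hv
    rw [Finset.mem_sdiff, Finset.mem_filter] at hv
    refine ⟨hv.1.2, fun e he hve => ?_⟩
    exact hv.2 (by rw [hTdef, Finset.mem_filter]; exact ⟨Finset.mem_univ _, e, he, hve⟩)
  have hsum2 : ∑ c : G'.ConnectedComponent,
      ((Finset.univ.filter (fun v => G'.connectedComponentMk v = c)) \ Tfin).card ≤
      Fintype.card G'.ConnectedComponent * (ℓ * (k + 2)) := by
    rw [← Finset.card_univ, ← smul_eq_mul]
    exact Finset.sum_le_card_nsmul _ _ _ (fun c _ => hUb c)
  have hfinal : Fintype.card V ≤ 2 * k + 2 * k * (ℓ * (k + 2)) := by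
    rw [hpart]
    calc ∑ c : G'.ConnectedComponent,
        (Finset.univ.filter (fun v => G'.connectedComponentMk v = c)).card
        = ∑ c : G'.ConnectedComponent,
          ((Tfin.filter (fun v => G'.connectedComponentMk v = c)).card +
          ((Finset.univ.filter (fun v => G'.connectedComponentMk v = c)) \ Tfin).card) := by
          exact Finset.sum_congr rfl (fun c _ => hsplit c)
      _ = Tfin.card + ∑ c : G'.ConnectedComponent,
          ((Finset.univ.filter (fun v => G'.connectedComponentMk v = c)) \ Tfin).card := by
          rw [Finset.sum_add_distrib, ← hTpart]
      _ ≤ 2 * k + Fintype.card G'.ConnectedComponent * (ℓ * (k + 2)) := by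
          exact Nat.add_le_add hTcard hsum2
      _ ≤ 2 * k + 2 * k * (ℓ * (k + 2)) := by
          have := le_trans hNcomp hTcard
          exact Nat.add_le_add_left (Nat.mul_le_mul_right _ this) _
  nlinarith
end
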